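/- arXiv:1210.5869 — 2 statements merged into one kernel-verified Lean document; each statement's English description precedes it below -/
import Mathlib

section
/- Let k ≥ 1 and let c^(0), c^(1), …, c^(k) be compositions (possibly empty) with c^(k) nonempty, and set N = 3k + Σ_{i=0}^{k} |c^(i)|. Then P(c^(0) ⊕ (3) ⊕ c^(1) ⊕ (3) ⊕ ⋯ ⊕ (3) ⊕ c^(k)) = [N! / ((|c^(0)|+1)! · ∏_{i=1}^{k−1} (|c^(i)|+3)! · (|c^(k)|+2)!)] · P(c^(0) ⊕ (1)) · (∏_{i=1}^{k−1} P((2) ⊕ c^(i) ⊕ (1))) · P((2) ⊕ c^(k)). -/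
/-- `i` (1-based, with `1 < i < n`) is a peak of the permutation `σ` of `{1,…,n}`
(represented as a permutation of `Fin n`, position `j` (1-based) being index `j-1`). -/
def IsPeak {n : ℕ} (σ : Equiv.Perm (Fin n)) (i : ℕ) : Prop :=
  ∃ (h₂ : 2 ≤ i) (h₃ : i < n),
    σ ⟨i - 2, by omega⟩ < σ ⟨i - 1, by omega⟩ ∧ σ ⟨i, h₃⟩ < σ ⟨i - 1, by omega⟩

open Classical in
/-- The peak set of a permutation of `{1,…,n}` (as a set of 1-based positions). -/
noncomputable def peakSet {n : ℕ} (σ : Equiv.Perm (Fin n)) : Finset ℕ :=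
  (Finset.range n).filter (fun i => IsPeak σ i)

/-- `P(S;n)`: the number of permutations of `{1,…,n}` with peak set `S`. -/
noncomputable def numPeakSet (n : ℕ) (S : Finset ℕ) : ℕ :=
  Nat.card {σ : Equiv.Perm (Fin n) // peakSet σ = S}

/-- `c` is a composition of `n`: a list of positive integers summing to `n`. -/
def IsComposition (n : ℕ) (c : List ℕ) : Prop :=
  (∀ x ∈ c, 0 < x) ∧ c.sum = n

/-- The set `S(c)` of proper partial sums of the composition `c`. -/
def compPeaks (c : List ℕ) : Finset ℕ :=
  (Finset.range (c.length - 1)).image (fun i => (c.take (i + 1)).sum)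

/-- `P(c)`: the number of permutations of `{1,…,|c|}` whose peak set is `S(c)`. -/
noncomputable def Pcomp (c : List ℕ) : ℕ :=
  numPeakSet c.sum (compPeaks c)

/-- A composition is maximal if `P(b) ≤ P(c)` for every composition `b` of the same size. -/
def IsMaximal (c : List ℕ) : Prop :=
  ∀ b : List ℕ, IsComposition c.sum b → Pcomp b ≤ Pcomp c

/-- `chain3 c k = c 0 ⊕ (3) ⊕ c 1 ⊕ (3) ⊕ ⋯ ⊕ (3) ⊕ c k`. -/
def chain3 (c : ℕ → List ℕ) : ℕ → List ℕ
  | 0 => c 0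
  | k + 1 => chain3 c k ++ [3] ++ c (k + 1)

section Join
variable {m r : ℕ}

lemma compl_card (A : Finset (Fin (m + r))) (hA : A.card = m) : Aᶜ.card = r := by
  rw [Finset.card_compl, hA, Fintype.card_fin]; omega

noncomputable def g1 (A : Finset (Fin (m + r))) (hA : A.card = m) (x : Fin m) : Fin (m + r) :=
  ((A.orderIsoOfFin hA) x).1

noncomputable def g2 (A : Finset (Fin (m + r))) (hA : A.card = m) (x : Fin r) : Fin (m + r) :=
  ((Aᶜ.orderIsoOfFin (compl_card A hA)) x).1

lemma g1_mem (A : Finset (Fin (m+r))) (hA : A.card = m) (x : Fin m) : g1 A hA x ∈ A :=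
  ((A.orderIsoOfFin hA) x).2

lemma g2_mem (A : Finset (Fin (m+r))) (hA : A.card = m) (x : Fin r) : g2 A hA x ∈ Aᶜ :=
  ((Aᶜ.orderIsoOfFin (compl_card A hA)) x).2

lemma g1_lt_iff (A : Finset (Fin (m+r))) (hA : A.card = m) {x y : Fin m} :
    g1 A hA x < g1 A hA y ↔ x < y := by
  rw [g1, g1, Subtype.coe_lt_coe, OrderIso.lt_iff_lt]

lemma g2_lt_iff (A : Finset (Fin (m+r))) (hA : A.card = m) {x y : Fin r} :
    g2 A hA x < g2 A hA y ↔ x < y := by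
  rw [g2, g2, Subtype.coe_lt_coe, OrderIso.lt_iff_lt]

lemma g1_inj (A : Finset (Fin (m+r))) (hA : A.card = m) : Function.Injective (g1 A hA) := by
  intro a b h
  rcases lt_trichotomy a b with hl | he | hl
  · exact absurd ((g1_lt_iff A hA).mpr hl) (by simp [h])
  · exact he
  · exact absurd ((g1_lt_iff A hA).mpr hl) (by simp [h])

lemma g2_inj (A : Finset (Fin (m+r))) (hA : A.card = m) : Function.Injective (g2 A hA) := by
  intro a b h
  rcases lt_trichotomy a b with hl | he | hl
  · exact absurd ((g2_lt_iff A hA).mpr hl) (by simp [h])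
  · exact he
  · exact absurd ((g2_lt_iff A hA).mpr hl) (by simp [h])

noncomputable def joinFun (A : Finset (Fin (m+r))) (hA : A.card = m)
    (σ1 : Equiv.Perm (Fin m)) (σ2 : Equiv.Perm (Fin r)) : Fin (m+r) → Fin (m+r) :=
  fun p => if h : (p : ℕ) < m then g1 A hA (σ1 ⟨p, h⟩)
    else g2 A hA (σ2 ⟨(p : ℕ) - m, by have := p.isLt; omega⟩)

lemma joinFun_inj (A : Finset (Fin (m+r))) (hA : A.card = m)
    (σ1 : Equiv.Perm (Fin m)) (σ2 : Equiv.Perm (Fin r)) :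
    Function.Injective (joinFun A hA σ1 σ2) := by
  intro p q h
  unfold joinFun at h
  by_cases hp : (p : ℕ) < m <;> by_cases hq : (q : ℕ) < m
  · rw [dif_pos hp, dif_pos hq] at h
    have := σ1.injective (g1_inj A hA h)
    exact Fin.ext (by simpa using congrArg Fin.val this)
  · rw [dif_pos hp, dif_neg hq] at h
    have h1 := g1_mem A hA (σ1 ⟨p, hp⟩)
    have h2 := g2_mem A hA (σ2 ⟨(q:ℕ) - m, by have := q.isLt; omega⟩)
    rw [h] at h1
    exact absurd h1 (Finset.mem_compl.mp h2)
  · rw [dif_neg hp, dif_pos hq] at h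
    have h1 := g1_mem A hA (σ1 ⟨q, hq⟩)
    have h2 := g2_mem A hA (σ2 ⟨(p:ℕ) - m, by have := p.isLt; omega⟩)
    rw [← h] at h1
    exact absurd h1 (Finset.mem_compl.mp h2)
  · rw [dif_neg hp, dif_neg hq] at h
    have := σ2.injective (g2_inj A hA h)
    have h2 : (p : ℕ) - m = (q : ℕ) - m := by simpa using congrArg Fin.val this
    exact Fin.ext (by omega)

noncomputable def join (A : Finset (Fin (m+r))) (hA : A.card = m)
    (σ1 : Equiv.Perm (Fin m)) (σ2 : Equiv.Perm (Fin r)) : Equiv.Perm (Fin (m+r)) :=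
  Equiv.ofBijective _ (Finite.injective_iff_bijective.mp (joinFun_inj A hA σ1 σ2))

lemma join_apply_lt (A : Finset (Fin (m+r))) (hA : A.card = m)
    (σ1 : Equiv.Perm (Fin m)) (σ2 : Equiv.Perm (Fin r)) {p : ℕ} (hp : p < m) (hpN : p < m + r) :
    join A hA σ1 σ2 ⟨p, hpN⟩ = g1 A hA (σ1 ⟨p, hp⟩) := by
  simp only [join, Equiv.ofBijective_apply, joinFun, dif_pos hp]

lemma join_apply_ge (A : Finset (Fin (m+r))) (hA : A.card = m)
    (σ1 : Equiv.Perm (Fin m)) (σ2 : Equiv.Perm (Fin r)) {p : ℕ} (hp : ¬ p < m) (hpN : p < m + r) :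
    join A hA σ1 σ2 ⟨p, hpN⟩ = g2 A hA (σ2 ⟨p - m, by omega⟩) := by
  simp only [join, Equiv.ofBijective_apply, joinFun, dif_neg hp]

/-- The tuple-to-permutation map. -/
noncomputable def J : ({A : Finset (Fin (m+r)) // A.card = m} × Equiv.Perm (Fin m) × Equiv.Perm (Fin r))
    → Equiv.Perm (Fin (m+r)) :=
  fun x => join x.1.1 x.1.2 x.2.1 x.2.2

lemma join_image (A : Finset (Fin (m+r))) (hA : A.card = m)
    (σ1 : Equiv.Perm (Fin m)) (σ2 : Equiv.Perm (Fin r)) :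
    (Finset.univ.image (fun i : Fin m => join A hA σ1 σ2 ⟨(i : ℕ), by omega⟩)) = A := by
  ext a
  simp only [Finset.mem_image, Finset.mem_univ, true_and]
  constructor
  · rintro ⟨i, rfl⟩
    rw [join_apply_lt A hA σ1 σ2 i.isLt]
    exact g1_mem A hA _
  · intro ha
    refine ⟨σ1.symm ((A.orderIsoOfFin hA).symm ⟨a, ha⟩), ?_⟩
    rw [join_apply_lt A hA σ1 σ2 (σ1.symm ((A.orderIsoOfFin hA).symm ⟨a, ha⟩)).isLt]
    simp [g1]

lemma J_bij : Function.Bijective (J (m := m) (r := r)) := by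
  constructor
  · rintro ⟨⟨A, hA⟩, σ1, σ2⟩ ⟨⟨A', hA'⟩, σ1', σ2'⟩ h
    have hpt : ∀ p, join A hA σ1 σ2 p = join A' hA' σ1' σ2' p :=
      fun p => DFunLike.congr_fun h p
    have hAA : A = A' := by
      rw [← join_image A hA σ1 σ2, ← join_image A' hA' σ1' σ2']
      apply Finset.image_congr
      intro i _
      exact hpt _
    subst hAA
    have h1 : σ1 = σ1' := by
      apply Equiv.ext
      intro i
      have hlt : (i : ℕ) < m + r := by have := i.isLt; omega
      have e1 := join_apply_lt A hA σ1 σ2 i.isLt hlt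
      have e2 := join_apply_lt A hA' σ1' σ2' i.isLt hlt
      have key : g1 A hA (σ1 ⟨(i:ℕ), i.isLt⟩) = g1 A hA (σ1' ⟨(i:ℕ), i.isLt⟩) :=
        (e1.symm.trans (hpt ⟨(i:ℕ), hlt⟩)).trans e2
      have := g1_inj A hA key
      simpa using this
    have h2 : σ2 = σ2' := by
      apply Equiv.ext
      intro j
      have hlt : m + (j : ℕ) < m + r := by have := j.isLt; omega
      have hge : ¬ (m + (j : ℕ) < m) := by omega
      have e1 := join_apply_ge A hA σ1 σ2 hge hlt
      have e2 := join_apply_ge A hA' σ1' σ2' hge hlt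
      have key : g2 A hA (σ2 ⟨m + (j:ℕ) - m, by omega⟩)
          = g2 A hA (σ2' ⟨m + (j:ℕ) - m, by omega⟩) :=
        (e1.symm.trans (hpt ⟨m + (j:ℕ), hlt⟩)).trans e2
      have h3 := g2_inj A hA key
      have hjj : (⟨m + (j:ℕ) - m, by omega⟩ : Fin r) = j := Fin.ext (by show m + (j:ℕ) - m = (j:ℕ); omega)
      rw [hjj] at h3
      exact h3
    simp only [Prod.ext_iff, Subtype.ext_iff]
    exact ⟨trivial, h1, h2⟩
  · intro σ
    have hltm : ∀ i : Fin m, (i : ℕ) < m + r := fun i => by have := i.isLt; omega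
    have hltr : ∀ j : Fin r, m + (j : ℕ) < m + r := fun j => by have := j.isLt; omega
    set A : Finset (Fin (m+r)) := Finset.univ.image (fun i : Fin m => σ ⟨(i:ℕ), hltm i⟩) with hAdef
    have hinj0 : Function.Injective (fun i : Fin m => σ ⟨(i:ℕ), hltm i⟩) := by
      intro a b hab
      have := σ.injective hab
      exact Fin.ext (by simpa using congrArg Fin.val this)
    have hA : A.card = m := by
      rw [hAdef, Finset.card_image_of_injective _ hinj0, Finset.card_univ, Fintype.card_fin]
    have mem1 : ∀ i : Fin m, σ ⟨(i:ℕ), hltm i⟩ ∈ A := by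
      intro i; rw [hAdef]; exact Finset.mem_image_of_mem _ (Finset.mem_univ i)
    have mem2 : ∀ j : Fin r, σ ⟨m + (j:ℕ), hltr j⟩ ∈ Aᶜ := by
      intro j
      rw [Finset.mem_compl, hAdef, Finset.mem_image]
      rintro ⟨i, -, hi⟩
      have := congrArg Fin.val (σ.injective hi)
      simp only at this
      have hb := i.isLt
      omega
    have inj1 : Function.Injective (fun i : Fin m => (A.orderIsoOfFin hA).symm ⟨σ ⟨(i:ℕ), hltm i⟩, mem1 i⟩) := by
      intro a b hab
      have := (A.orderIsoOfFin hA).symm.injective hab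
      have := Subtype.ext_iff.mp this
      exact hinj0 this
    have inj2 : Function.Injective (fun j : Fin r => (Aᶜ.orderIsoOfFin (compl_card A hA)).symm ⟨σ ⟨m + (j:ℕ), hltr j⟩, mem2 j⟩) := by
      intro a b hab
      have := (Aᶜ.orderIsoOfFin (compl_card A hA)).symm.injective hab
      have h2 := Subtype.ext_iff.mp this
      have := congrArg Fin.val (σ.injective h2)
      simp only at this
      exact Fin.ext (by omega)
    refine ⟨⟨⟨A, hA⟩, Equiv.ofBijective _ (Finite.injective_iff_bijective.mp inj1),
      Equiv.ofBijective _ (Finite.injective_iff_bijective.mp inj2)⟩, ?_⟩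
    apply Equiv.ext
    intro p
    show joinFun A hA _ _ p = σ p
    unfold joinFun
    by_cases hp : (p : ℕ) < m
    · rw [dif_pos hp]
      show g1 A hA _ = σ p
      rw [g1]
      rw [Equiv.ofBijective_apply]
      simp only [OrderIso.apply_symm_apply]
    · rw [dif_neg hp]
      show g2 A hA _ = σ p
      rw [g2]
      rw [Equiv.ofBijective_apply]
      simp only [OrderIso.apply_symm_apply]
      exact congrArg σ (Fin.ext (by show m + ((p:ℕ) - m) = (p:ℕ); omega))

lemma card_eq (S S1 S2 : Finset ℕ)
    (hiff : ∀ (A : Finset (Fin (m+r))) (hA : A.card = m) (σ1 : Equiv.Perm (Fin m))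
      (σ2 : Equiv.Perm (Fin r)),
      peakSet (join A hA σ1 σ2) = S ↔ (peakSet σ1 = S1 ∧ peakSet σ2 = S2)) :
    numPeakSet (m+r) S = (m+r).choose m * (numPeakSet m S1 * numPeakSet r S2) := by
  unfold numPeakSet
  have e0 : {x : ({A : Finset (Fin (m+r)) // A.card = m} × Equiv.Perm (Fin m) × Equiv.Perm (Fin r)) //
      peakSet (J x) = S} ≃ {σ : Equiv.Perm (Fin (m+r)) // peakSet σ = S} :=
    (Equiv.ofBijective J J_bij).subtypeEquiv (fun x => Iff.rfl)
  have e1 : {x : ({A : Finset (Fin (m+r)) // A.card = m} × Equiv.Perm (Fin m) × Equiv.Perm (Fin r)) //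
      peakSet (J x) = S} ≃ {x : ({A : Finset (Fin (m+r)) // A.card = m} × Equiv.Perm (Fin m) × Equiv.Perm (Fin r)) //
      peakSet x.2.1 = S1 ∧ peakSet x.2.2 = S2} :=
    Equiv.subtypeEquivRight (fun x => hiff x.1.1 x.1.2 x.2.1 x.2.2)
  have e2 : {x : ({A : Finset (Fin (m+r)) // A.card = m} × Equiv.Perm (Fin m) × Equiv.Perm (Fin r)) //
      peakSet x.2.1 = S1 ∧ peakSet x.2.2 = S2} ≃
      {A : Finset (Fin (m+r)) // A.card = m} ×
        ({σ1 : Equiv.Perm (Fin m) // peakSet σ1 = S1} × {σ2 : Equiv.Perm (Fin r) // peakSet σ2 = S2}) :=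
    { toFun := fun x => ⟨x.1.1, ⟨x.1.2.1, x.2.1⟩, ⟨x.1.2.2, x.2.2⟩⟩,
      invFun := fun y => ⟨⟨y.1, y.2.1.1, y.2.2.1⟩, ⟨y.2.1.2, y.2.2.2⟩⟩,
      left_inv := fun x => rfl, right_inv := fun y => rfl }
  rw [Nat.card_congr ((e0.symm.trans e1).trans e2), Nat.card_prod, Nat.card_prod]
  rw [Nat.card_eq_fintype_card (α := {A : Finset (Fin (m+r)) // A.card = m}),
    Fintype.card_finset_len, Fintype.card_fin]

end Join


section Transfer
variable {m r : ℕ}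

def natApp {n : ℕ} (τ : Equiv.Perm (Fin n)) (p : ℕ) : ℕ :=
  if h : p < n then (τ ⟨p, h⟩ : ℕ) else 0

lemma natApp_of_lt {n : ℕ} (τ : Equiv.Perm (Fin n)) {p : ℕ} (hp : p < n) :
    natApp τ p = (τ ⟨p, hp⟩ : ℕ) := dif_pos hp

lemma isPeak_iff_natApp {n : ℕ} (τ : Equiv.Perm (Fin n)) (i : ℕ) :
    IsPeak τ i ↔ 2 ≤ i ∧ i < n ∧ natApp τ (i-2) < natApp τ (i-1) ∧ natApp τ i < natApp τ (i-1) := by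
  constructor
  · rintro ⟨h2, h3, ha, hb⟩
    have p2 : i - 2 < n := lt_of_le_of_lt (Nat.sub_le i 2) h3
    have p1 : i - 1 < n := lt_of_le_of_lt (Nat.sub_le i 1) h3
    rw [natApp_of_lt τ p2, natApp_of_lt τ p1, natApp_of_lt τ h3]
    exact ⟨h2, h3, ha, hb⟩
  · rintro ⟨h2, h3, ha, hb⟩
    have p2 : i - 2 < n := lt_of_le_of_lt (Nat.sub_le i 2) h3
    have p1 : i - 1 < n := lt_of_le_of_lt (Nat.sub_le i 1) h3
    rw [natApp_of_lt τ p2, natApp_of_lt τ p1] at ha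
    rw [natApp_of_lt τ h3, natApp_of_lt τ p1] at hb
    exact ⟨h2, h3, ha, hb⟩

lemma peakSet_eq_iff {n : ℕ} (τ : Equiv.Perm (Fin n)) (T : Finset ℕ) :
    peakSet τ = T ↔ ∀ i, (IsPeak τ i ↔ i ∈ T) := by
  rw [Finset.ext_iff]
  apply forall_congr'
  intro i
  simp only [peakSet, Finset.mem_filter, Finset.mem_range]
  constructor
  · intro h
    constructor
    · intro hp
      exact h.mp ⟨by obtain ⟨_, h3, _⟩ := hp; exact h3, hp⟩
    · intro hT
      exact (h.mpr hT).2
  · intro h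
    constructor
    · intro hp; exact h.mp hp.2
    · intro hT
      have := h.mpr hT
      exact ⟨by obtain ⟨_, h3, _⟩ := this; exact h3, this⟩

lemma natApp_join_low (A : Finset (Fin (m+r))) (hA : A.card = m)
    (σ1 : Equiv.Perm (Fin m)) (σ2 : Equiv.Perm (Fin r)) (p : ℕ) (hp : p < m) :
    natApp (join A hA σ1 σ2) p = (g1 A hA (σ1 ⟨p, hp⟩) : ℕ) := by
  rw [natApp_of_lt _ (show p < m + r by omega), join_apply_lt A hA σ1 σ2 hp]

lemma natApp_join_high (A : Finset (Fin (m+r))) (hA : A.card = m)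
    (σ1 : Equiv.Perm (Fin m)) (σ2 : Equiv.Perm (Fin r)) (j : ℕ) (hj : j < r) :
    natApp (join A hA σ1 σ2) (m + j) = (g2 A hA (σ2 ⟨j, hj⟩) : ℕ) := by
  rw [natApp_of_lt _ (show m + j < m + r by omega),
    join_apply_ge A hA σ1 σ2 (show ¬ m + j < m by omega)]
  exact congrArg (fun x => (g2 A hA (σ2 x) : ℕ)) (Fin.ext (by show m + j - m = j; omega))

lemma lt_low (A : Finset (Fin (m+r))) (hA : A.card = m)
    (σ1 : Equiv.Perm (Fin m)) (σ2 : Equiv.Perm (Fin r)) (p q : ℕ) (hp : p < m) (hq : q < m) :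
    (natApp (join A hA σ1 σ2) p < natApp (join A hA σ1 σ2) q ↔ natApp σ1 p < natApp σ1 q) := by
  rw [natApp_join_low A hA σ1 σ2 p hp, natApp_join_low A hA σ1 σ2 q hq,
    natApp_of_lt σ1 hp, natApp_of_lt σ1 hq, ← Fin.lt_def, ← Fin.lt_def, g1_lt_iff, Fin.lt_def]

lemma lt_high (A : Finset (Fin (m+r))) (hA : A.card = m)
    (σ1 : Equiv.Perm (Fin m)) (σ2 : Equiv.Perm (Fin r)) (a b : ℕ) (ha : a < r) (hb : b < r) :
    (natApp (join A hA σ1 σ2) (m + a) < natApp (join A hA σ1 σ2) (m + b) ↔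
      natApp σ2 a < natApp σ2 b) := by
  rw [natApp_join_high A hA σ1 σ2 a ha, natApp_join_high A hA σ1 σ2 b hb,
    natApp_of_lt σ2 ha, natApp_of_lt σ2 hb, ← Fin.lt_def, ← Fin.lt_def, g2_lt_iff, Fin.lt_def]

lemma isPeak_join_low (A : Finset (Fin (m+r))) (hA : A.card = m)
    (σ1 : Equiv.Perm (Fin m)) (σ2 : Equiv.Perm (Fin r)) {i : ℕ} (h2 : 2 ≤ i) (him : i < m) :
    IsPeak (join A hA σ1 σ2) i ↔ IsPeak σ1 i := by
  rw [isPeak_iff_natApp, isPeak_iff_natApp,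
    lt_low A hA σ1 σ2 (i-2) (i-1) (by omega) (by omega),
    lt_low A hA σ1 σ2 i (i-1) him (by omega)]
  constructor <;> rintro ⟨-, -, x, y⟩ <;> exact ⟨h2, by omega, x, y⟩

lemma isPeak_join_high (A : Finset (Fin (m+r))) (hA : A.card = m)
    (σ1 : Equiv.Perm (Fin m)) (σ2 : Equiv.Perm (Fin r)) {j : ℕ} (h2 : 2 ≤ j) (hjr : j < r) :
    IsPeak (join A hA σ1 σ2) (m + j) ↔ IsPeak σ2 j := by
  rw [isPeak_iff_natApp, isPeak_iff_natApp,
    show m + j - 2 = m + (j - 2) from by omega,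
    show m + j - 1 = m + (j - 1) from by omega,
    lt_high A hA σ1 σ2 (j-2) (j-1) (by omega) (by omega),
    lt_high A hA σ1 σ2 j (j-1) hjr (by omega)]
  constructor <;> rintro ⟨-, -, x, y⟩
  · exact ⟨h2, by omega, x, y⟩
  · exact ⟨by omega, by omega, x, y⟩

lemma main_iff (A : Finset (Fin (m+r))) (hA : A.card = m)
    (σ1 : Equiv.Perm (Fin m)) (σ2 : Equiv.Perm (Fin r)) (S S1 S2 : Finset ℕ)
    (hS : ∀ a, a ∈ S ↔ (a ∈ S1 ∨ ∃ s ∈ S2, a = m + s))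
    (hS1 : ∀ s ∈ S1, 2 ≤ s ∧ s ≤ m - 1)
    (hS2 : ∀ s ∈ S2, 2 ≤ s ∧ s ≤ r - 1)
    (h2S2 : 2 ∈ S2)
    (hm1 : 2 ≤ m → (m - 1) ∈ S1) :
    peakSet (join A hA σ1 σ2) = S ↔ (peakSet σ1 = S1 ∧ peakSet σ2 = S2) := by
  have hr3 : 3 ≤ r := by have := (hS2 2 h2S2).2; omega
  rw [peakSet_eq_iff, peakSet_eq_iff, peakSet_eq_iff]
  constructor
  · intro H
    refine ⟨?_, ?_⟩
    · intro i
      by_cases hi : 2 ≤ i ∧ i < m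
      · rw [← isPeak_join_low A hA σ1 σ2 hi.1 hi.2, H i, hS i]
        constructor
        · rintro (h | ⟨s, hs, rfl⟩)
          · exact h
          · exfalso; have := (hS2 s hs).1; omega
        · exact Or.inl
      · constructor
        · rintro ⟨h2, h3, -⟩; exact absurd ⟨h2, h3⟩ hi
        · intro h; have h' := hS1 i h; exact absurd ⟨h'.1, by omega⟩ hi
    · intro j
      by_cases hj : 2 ≤ j ∧ j < r
      · rw [← isPeak_join_high A hA σ1 σ2 hj.1 hj.2, H (m+j), hS (m+j)]
        constructor
        · rintro (h | ⟨s, hs, he⟩)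
          · exfalso; have := hS1 _ h; omega
          · have : j = s := by omega
            rwa [this]
        · intro h; exact Or.inr ⟨j, h, rfl⟩
      · constructor
        · rintro ⟨h2, h3, -⟩; exact absurd ⟨h2, h3⟩ hj
        · intro h; have h' := hS2 j h; exact absurd ⟨h'.1, by omega⟩ hj
  · rintro ⟨H1, H2⟩ i
    by_cases hc1 : i < 2
    · constructor
      · rintro ⟨h2, -⟩; omega
      · intro h
        rw [hS i] at h
        exfalso
        rcases h with h | ⟨s, hs, rfl⟩
        · have := (hS1 i h).1; omega
        · have := (hS2 s hs).1; omega
    · push_neg at hc1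
      by_cases hc2 : i < m
      · rw [isPeak_join_low A hA σ1 σ2 hc1 hc2, H1 i, hS i]
        constructor
        · exact Or.inl
        · rintro (h | ⟨s, hs, rfl⟩)
          · exact h
          · exfalso; have := (hS2 s hs).1; omega
      · by_cases hc3 : i = m
        · rw [hc3]
          constructor
          · intro hp
            exfalso
            have hm2 : 2 ≤ m := by omega
            have hm1' := hm1 hm2
            have h1 := (hS1 _ hm1').1
            have hpk : IsPeak σ1 (m-1) := (H1 (m-1)).mpr hm1'
            rw [isPeak_iff_natApp] at hpk hp
            obtain ⟨-, -, -, hb⟩ := hpk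
            obtain ⟨-, -, ha', -⟩ := hp
            rw [lt_low A hA σ1 σ2 (m-2) (m-1) (by omega) (by omega)] at ha'
            rw [show m-1-1 = m-2 from by omega] at hb
            omega
          · intro h
            rw [hS m] at h
            exfalso
            rcases h with h | ⟨s, hs, he⟩
            · have := (hS1 _ h).2; have := (hS1 _ h).1; omega
            · have := (hS2 s hs).1; omega
        · by_cases hc4 : i = m + 1
          · rw [hc4]
            constructor
            · intro hp
              exfalso
              have hpk : IsPeak σ2 2 := (H2 2).mpr h2S2
              rw [isPeak_iff_natApp] at hpk hp
              obtain ⟨-, -, ha, -⟩ := hpk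
              obtain ⟨-, -, -, hb⟩ := hp
              rw [show m+1-1 = m+0 from by omega] at hb
              rw [lt_high A hA σ1 σ2 1 0 (by omega) (by omega)] at hb
              rw [show (2:ℕ)-2 = 0 from rfl, show (2:ℕ)-1 = 1 from rfl] at ha
              omega
            · intro h
              rw [hS (m+1)] at h
              exfalso
              rcases h with h | ⟨s, hs, he⟩
              · have := (hS1 _ h).2; have := (hS1 _ h).1; omega
              · have := (hS2 s hs).1; omega
          · by_cases hc5 : i < m + r
            · have he : i = m + (i - m) := by omega
              rw [he, isPeak_join_high A hA σ1 σ2 (by omega) (by omega), H2 (i-m), hS (m+(i-m))]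
              constructor
              · intro h; exact Or.inr ⟨i-m, h, rfl⟩
              · rintro (h | ⟨s, hs, heq⟩)
                · exfalso; have := (hS1 _ h).2; have := (hS1 _ h).1; omega
                · have : i - m = s := by omega
                  rwa [this]
            · constructor
              · rintro ⟨-, h3, -⟩; omega
              · intro h; rw [hS i] at h; exfalso
                rcases h with h | ⟨s, hs, rfl⟩
                · have := (hS1 _ h).2; have := (hS1 _ h).1; omega
                · have := (hS2 s hs).2; omega

end Transfer


section Sets

lemma mem_compPeaks_iff (c : List ℕ) (a : ℕ) :
    a ∈ compPeaks c ↔ ∃ i, i < c.length - 1 ∧ a = (c.take (i+1)).sum := by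
  simp only [compPeaks, Finset.mem_image, Finset.mem_range]
  constructor
  · rintro ⟨i, hi, rfl⟩; exact ⟨i, hi, rfl⟩
  · rintro ⟨i, hi, rfl⟩; exact ⟨i, hi, rfl⟩

lemma mem_S1 (d : List ℕ) (a : ℕ) :
    a ∈ compPeaks (d ++ [1]) ↔ ∃ i, i < d.length ∧ a = (d.take (i+1)).sum := by
  rw [mem_compPeaks_iff]
  constructor
  · rintro ⟨i, hi, rfl⟩
    simp only [List.length_append, List.length_cons, List.length_nil] at hi
    have hi' : i < d.length := by omega
    exact ⟨i, hi', by rw [List.take_append_of_le_length (by omega)]⟩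
  · rintro ⟨i, hi, rfl⟩
    refine ⟨i, by simp; omega, by rw [List.take_append_of_le_length (by omega)]⟩

lemma mem_S2 (e : List ℕ) (a : ℕ) :
    a ∈ compPeaks (2 :: e) ↔ ∃ j, j < e.length ∧ a = 2 + (e.take j).sum := by
  rw [mem_compPeaks_iff]
  constructor
  · rintro ⟨j, hj, rfl⟩
    simp only [List.length_cons] at hj
    exact ⟨j, by omega, by rw [List.take_succ_cons, List.sum_cons]⟩
  · rintro ⟨j, hj, rfl⟩
    exact ⟨j, by simp; omega, by rw [List.take_succ_cons, List.sum_cons]⟩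

lemma mem_S (d e : List ℕ) (a : ℕ) :
    a ∈ compPeaks (d ++ [3] ++ e) ↔
      ((∃ i, i < d.length ∧ a = (d.take (i+1)).sum) ∨
        (∃ j, j < e.length ∧ a = d.sum + 3 + (e.take j).sum)) := by
  have h1 : d ++ [3] ++ e = d ++ (3 :: e) := by simp
  rw [h1, mem_compPeaks_iff]
  have hlen : (d ++ (3 :: e)).length - 1 = d.length + e.length := by
    simp only [List.length_append, List.length_cons]; omega
  rw [hlen]
  constructor
  · rintro ⟨i, hi, rfl⟩
    by_cases hcase : i < d.length
    · left; exact ⟨i, hcase, by rw [List.take_append_of_le_length (by omega)]⟩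
    · right
      refine ⟨i - d.length, by omega, ?_⟩
      have h2 : i + 1 = d.length + (i - d.length + 1) := by omega
      rw [h2, List.take_length_add_append, List.sum_append, List.take_succ_cons, List.sum_cons]
      omega
  · rintro (⟨i, hi, rfl⟩ | ⟨j, hj, rfl⟩)
    · exact ⟨i, by omega, by rw [List.take_append_of_le_length (by omega)]⟩
    · refine ⟨d.length + j, by omega, ?_⟩
      have h2 : d.length + j + 1 = d.length + (j + 1) := by omega
      rw [h2, List.take_length_add_append, List.sum_append, List.take_succ_cons, List.sum_cons]
      omega

lemma sum_take_pos {d : List ℕ} (hd : ∀ x ∈ d, 0 < x) {i : ℕ} (hi : i < d.length) :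
    0 < (d.take (i+1)).sum := by
  have hne : d.take (i+1) ≠ [] := by
    intro h
    have := congrArg List.length h
    simp only [List.length_take, List.length_nil] at this
    omega
  apply List.sum_pos
  · intro x hx; exact hd x (List.take_subset _ _ hx)
  · exact hne

lemma sum_take_le (d : List ℕ) (k : ℕ) : (d.take k).sum ≤ d.sum := by
  conv_rhs => rw [← List.take_append_drop k d]
  rw [List.sum_append]
  omega

lemma sum_take_lt {e : List ℕ} (he : ∀ x ∈ e, 0 < x) {j : ℕ} (hj : j < e.length) :
    (e.take j).sum < e.sum := by
  conv_rhs => rw [← List.take_append_drop j e]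
  rw [List.sum_append]
  have hne : e.drop j ≠ [] := by
    intro h
    have := congrArg List.length h
    simp only [List.length_drop, List.length_nil] at this
    omega
  have : 0 < (e.drop j).sum := by
    apply List.sum_pos
    · intro x hx; exact he x (List.drop_subset _ _ hx)
    · exact hne
  omega

lemma numPeakSet_one_mem (n : ℕ) (T : Finset ℕ) (h1 : 1 ∈ T) : numPeakSet n T = 0 := by
  have : IsEmpty {σ : Equiv.Perm (Fin n) // peakSet σ = T} := by
    refine ⟨fun x => ?_⟩
    obtain ⟨σ, hσ⟩ := x
    rw [peakSet_eq_iff] at hσ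
    obtain ⟨h2, -⟩ := (hσ 1).mpr h1
    omega
  exact Nat.card_of_isEmpty

lemma Pcomp_split (d e : List ℕ) (hd : ∀ x ∈ d, 0 < x) (he : ∀ x ∈ e, 0 < x) (hee : e ≠ []) :
    Pcomp (d ++ [3] ++ e) = (d.sum + 1 + (e.sum + 2)).choose (d.sum + 1) *
      (Pcomp (d ++ [1]) * Pcomp ([2] ++ e)) := by
  have h2e : [2] ++ e = 2 :: e := List.singleton_append
  have hsum : (d ++ [3] ++ e).sum = (d.sum + 1) + (e.sum + 2) := by
    simp only [List.sum_append, List.sum_cons, List.sum_nil]; omega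
  have hsum1 : (d ++ [1]).sum = d.sum + 1 := by
    simp only [List.sum_append, List.sum_cons, List.sum_nil]; omega
  have hsum2 : ([2] ++ e).sum = e.sum + 2 := by
    simp only [List.sum_append, List.sum_cons, List.sum_nil]; omega
  have helen : 0 < e.length := List.length_pos_iff.mpr hee
  unfold Pcomp
  rw [hsum, hsum1, hsum2, h2e]
  by_cases hjunk : (1 : ℕ) ∈ compPeaks (d ++ [1])
  · have h1S : (1 : ℕ) ∈ compPeaks (d ++ [3] ++ e) := by
      rw [mem_S]
      rw [mem_S1] at hjunk
      exact Or.inl hjunk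
    rw [numPeakSet_one_mem _ _ h1S, numPeakSet_one_mem _ _ hjunk]
    simp
  · apply card_eq
    intro A hA σ1 σ2
    apply main_iff
    · intro a
      rw [mem_S, mem_S1]
      constructor
      · rintro (h | ⟨j, hj, rfl⟩)
        · exact Or.inl h
        · refine Or.inr ⟨2 + (e.take j).sum, ?_, by omega⟩
          rw [mem_S2]
          exact ⟨j, hj, rfl⟩
      · rintro (h | ⟨s, hs, rfl⟩)
        · exact Or.inl h
        · rw [mem_S2] at hs
          obtain ⟨j, hj, rfl⟩ := hs
          exact Or.inr ⟨j, hj, by omega⟩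
    · intro s hs
      have hb1 : s ≤ d.sum := by
        rw [mem_S1] at hs
        obtain ⟨i, hi, rfl⟩ := hs
        exact sum_take_le d (i+1)
      have hb2 : 0 < s := by
        rw [mem_S1] at hs
        obtain ⟨i, hi, rfl⟩ := hs
        exact sum_take_pos hd hi
      have hb3 : s ≠ 1 := by
        intro h
        rw [h] at hs
        exact hjunk hs
      constructor
      · omega
      · omega
    · intro s hs
      rw [mem_S2] at hs
      obtain ⟨j, hj, rfl⟩ := hs
      have := sum_take_lt he hj
      constructor
      · omega
      · omega
    · rw [mem_S2]
      exact ⟨0, helen, by simp⟩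
    · intro hm2
      rw [mem_S1]
      have hdne : d ≠ [] := by
        intro h
        rw [h] at hm2
        simp at hm2
      have hdlen : 0 < d.length := List.length_pos_iff.mpr hdne
      refine ⟨d.length - 1, by omega, ?_⟩
      rw [show d.length - 1 + 1 = d.length from by omega, List.take_length]
      omega

end Sets


section Chain

lemma chain3_pos (c : ℕ → List ℕ) (j : ℕ) (h : ∀ i ≤ j, ∀ x ∈ c i, 0 < x) :
    ∀ x ∈ chain3 c j, 0 < x := by
  induction j with
  | zero => simpa [chain3] using h 0 le_rfl
  | succ n ih =>
    intro x hx
    simp only [chain3, List.mem_append] at hx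
    rcases hx with (hx | hx) | hx
    · exact ih (fun i hi => h i (by omega)) x hx
    · simp only [List.mem_singleton] at hx; omega
    · exact h (n+1) le_rfl x hx

lemma chain3_sum (c : ℕ → List ℕ) (j : ℕ) :
    (chain3 c j).sum = 3*j + ∑ i ∈ Finset.range (j+1), (c i).sum := by
  induction j with
  | zero => simp [chain3]
  | succ n ih =>
    simp only [chain3, List.sum_append, List.sum_cons, List.sum_nil, ih,
      Finset.sum_range_succ]
    omega

lemma claim (c : ℕ → List ℕ) : ∀ j, (∀ i ≤ j, ∀ x ∈ c i, 0 < x) →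
    Nat.factorial ((c 0).sum + 1) * (∏ i ∈ Finset.Icc 1 j, Nat.factorial ((c i).sum + 3)) *
      Pcomp (chain3 c j ++ [1])
    = Nat.factorial ((chain3 c j).sum + 1) *
      (Pcomp (c 0 ++ [1]) * ∏ i ∈ Finset.Icc 1 j, Pcomp ([2] ++ c i ++ [1])) := by
  intro j
  induction j with
  | zero =>
    intro _
    rw [show Finset.Icc 1 0 = (∅ : Finset ℕ) from Finset.Icc_eq_empty (by omega)]
    simp only [Finset.prod_empty, mul_one, chain3]
  | succ n ih =>
    intro hpos
    have ih' := ih (fun i hi => hpos i (by omega))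
    have hpos1 : ∀ x ∈ c (n+1) ++ [1], 0 < x := by
      intro x hx
      rcases List.mem_append.mp hx with hx | hx
      · exact hpos (n+1) le_rfl x hx
      · simp only [List.mem_singleton] at hx; omega
    have key := Pcomp_split (chain3 c n) (c (n+1) ++ [1])
      (chain3_pos c n (fun i hi => hpos i (by omega))) hpos1 (by simp)
    have heq : chain3 c (n+1) ++ [1] = chain3 c n ++ [3] ++ (c (n+1) ++ [1]) := by
      simp [chain3, List.append_assoc]
    have hs : (c (n+1) ++ [1]).sum = (c (n+1)).sum + 1 := by
      simp only [List.sum_append, List.sum_cons, List.sum_nil]; omega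
    have hassoc : [2] ++ (c (n+1) ++ [1]) = [2] ++ c (n+1) ++ [1] := by
      simp [List.append_assoc]
    rw [hs, hassoc] at key
    set D := (chain3 c n).sum with hD
    set a := (c (n+1)).sum with ha
    have hsum1 : (chain3 c (n+1)).sum = D + 3 + a := by
      simp only [chain3, List.sum_append, List.sum_cons, List.sum_nil]
      omega
    have hfact : Nat.factorial ((chain3 c (n+1)).sum + 1)
        = (D + 1 + (a + 1 + 2)).choose (D + 1) * ((D+1).factorial * (a + 3).factorial) := by
      rw [hsum1]
      have h1 : D + 3 + a + 1 = D + 1 + (a + 1 + 2) := by omega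
      rw [h1]
      have := Nat.choose_mul_factorial_mul_factorial (show D + 1 ≤ D + 1 + (a+1+2) by omega)
      have h2 : D + 1 + (a+1+2) - (D+1) = a + 3 := by omega
      rw [h2] at this
      rw [← this]
      ring
    rw [Finset.prod_Icc_succ_top (by omega : 1 ≤ n + 1),
      Finset.prod_Icc_succ_top (by omega : 1 ≤ n + 1), heq, key, hfact]
    calc Nat.factorial ((c 0).sum + 1) *
          ((∏ i ∈ Finset.Icc 1 n, Nat.factorial ((c i).sum + 3)) * Nat.factorial (a + 3)) *
          ((D + 1 + (a + 1 + 2)).choose (D + 1) *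
            (Pcomp (chain3 c n ++ [1]) * Pcomp ([2] ++ c (n+1) ++ [1])))
        = (D + 1 + (a + 1 + 2)).choose (D + 1) * Nat.factorial (a + 3) *
            Pcomp ([2] ++ c (n+1) ++ [1]) *
            (Nat.factorial ((c 0).sum + 1) *
              (∏ i ∈ Finset.Icc 1 n, Nat.factorial ((c i).sum + 3)) *
              Pcomp (chain3 c n ++ [1])) := by ring
      _ = (D + 1 + (a + 1 + 2)).choose (D + 1) * Nat.factorial (a + 3) *
            Pcomp ([2] ++ c (n+1) ++ [1]) *
            (Nat.factorial (D + 1) *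
              (Pcomp (c 0 ++ [1]) * ∏ i ∈ Finset.Icc 1 n, Pcomp ([2] ++ c i ++ [1]))) := by
          rw [ih']
      _ = (D + 1 + (a + 1 + 2)).choose (D + 1) * ((D+1).factorial * (a + 3).factorial) *
            (Pcomp (c 0 ++ [1]) *
              ((∏ i ∈ Finset.Icc 1 n, Pcomp ([2] ++ c i ++ [1])) *
                Pcomp ([2] ++ c (n+1) ++ [1]))) := by ring

end Chain

theorem counting_formula (k : ℕ) (hk : 1 ≤ k) (c : ℕ → List ℕ)
    (hpos : ∀ i ≤ k, ∀ x ∈ c i, 0 < x) (hck : c k ≠ []) :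
    Nat.factorial ((c 0).sum + 1) *
      (∏ i ∈ Finset.Ioo 0 k, Nat.factorial ((c i).sum + 3)) *
      Nat.factorial ((c k).sum + 2) *
      Pcomp (chain3 c k)
    = Nat.factorial (3 * k + ∑ i ∈ Finset.range (k + 1), (c i).sum) *
      (Pcomp (c 0 ++ [1]) *
        (∏ i ∈ Finset.Ioo 0 k, Pcomp ([2] ++ c i ++ [1])) *
        Pcomp ([2] ++ c k)) := by
  obtain ⟨n, rfl⟩ : ∃ n, k = n + 1 := ⟨k - 1, by omega⟩
  have hIoo : Finset.Ioo 0 (n+1) = Finset.Icc 1 n := by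
    apply Finset.ext; intro x; simp [Finset.mem_Ioo, Finset.mem_Icc]; omega
  rw [hIoo]
  have key := Pcomp_split (chain3 c n) (c (n+1))
    (chain3_pos c n (fun i hi => hpos i (by omega))) (hpos (n+1) le_rfl) hck
  have hchain : chain3 c (n+1) = chain3 c n ++ [3] ++ c (n+1) := rfl
  have ih' := claim c n (fun i hi => hpos i (by omega))
  set D := (chain3 c n).sum with hD
  set a := (c (n+1)).sum with ha
  have hN : 3 * (n+1) + ∑ i ∈ Finset.range (n+1+1), (c i).sum = D + 1 + (a + 2) := by
    rw [hD, chain3_sum, Finset.sum_range_succ]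
    omega
  have hfact : Nat.factorial (3 * (n+1) + ∑ i ∈ Finset.range (n+1+1), (c i).sum)
      = (D + 1 + (a + 2)).choose (D + 1) * ((D+1).factorial * (a + 2).factorial) := by
    rw [hN]
    have := Nat.choose_mul_factorial_mul_factorial (show D + 1 ≤ D + 1 + (a+2) by omega)
    have h2 : D + 1 + (a+2) - (D+1) = a + 2 := by omega
    rw [h2] at this
    rw [← this]
    ring
  rw [hchain, key, hfact]
  calc Nat.factorial ((c 0).sum + 1) *
        (∏ i ∈ Finset.Icc 1 n, Nat.factorial ((c i).sum + 3)) *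
        Nat.factorial (a + 2) *
        ((D + 1 + (a + 2)).choose (D + 1) * (Pcomp (chain3 c n ++ [1]) * Pcomp ([2] ++ c (n+1))))
      = (D + 1 + (a + 2)).choose (D + 1) * Nat.factorial (a + 2) * Pcomp ([2] ++ c (n+1)) *
          (Nat.factorial ((c 0).sum + 1) *
            (∏ i ∈ Finset.Icc 1 n, Nat.factorial ((c i).sum + 3)) *
            Pcomp (chain3 c n ++ [1])) := by ring
    _ = (D + 1 + (a + 2)).choose (D + 1) * Nat.factorial (a + 2) * Pcomp ([2] ++ c (n+1)) *
          (Nat.factorial (D + 1) *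
            (Pcomp (c 0 ++ [1]) * ∏ i ∈ Finset.Icc 1 n, Pcomp ([2] ++ c i ++ [1]))) := by
        rw [ih']
    _ = (D + 1 + (a + 2)).choose (D + 1) * ((D+1).factorial * (a + 2).factorial) *
          (Pcomp (c 0 ++ [1]) * (∏ i ∈ Finset.Icc 1 n, Pcomp ([2] ++ c i ++ [1])) *
            Pcomp ([2] ++ c (n+1))) := by ring
end

section
/- For all integers s ≥ 1 and t ≥ 0, the composition c = (3^s, 2, 3^t, 2) of n = 3s+3t+4 (s parts equal to 3, a 2, t parts equal to 3, then a 2) satisfies P(c) = (2/5)·3^{−s−t}·(3s+3t+4)!, i.e. 5·3^{s+t}·P(c) = 2·(3s+3t+4)!. -/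
namespace PeakAux
abbrev RSeq (n : ℕ) := ∀ j : Fin n, Fin (j.val + 1)
def rk {n : ℕ} (σ : Equiv.Perm (Fin n)) (j : Fin n) : ℕ :=
  ((Finset.Iio j).filter (fun i => σ i < σ j)).card

open Finset in
/-- rank at j plus number of later smaller entries equals the value at j. -/
lemma rk_add {n : ℕ} (σ : Equiv.Perm (Fin n)) (j : Fin n) :
    rk σ j + ((Finset.Ioi j).filter (fun i => σ i < σ j)).card = (σ j).val := by
  classical
  have hsplit : (univ.filter (fun i => σ i < σ j)) =
      ((Finset.Iio j).filter (fun i => σ i < σ j)) ∪ ((Finset.Ioi j).filter (fun i => σ i < σ j)) := by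
    ext i
    simp only [mem_filter, mem_union, mem_univ, true_and, mem_Iio, mem_Ioi]
    constructor
    · intro hi
      have : i ≠ j := by intro e; subst e; exact absurd hi (lt_irrefl _)
      rcases this.lt_or_gt with h | h
      · exact Or.inl ⟨h, hi⟩
      · exact Or.inr ⟨h, hi⟩
    · rintro (⟨_, h⟩ | ⟨_, h⟩) <;> exact h
  have hdisj : Disjoint ((Finset.Iio j).filter (fun i => σ i < σ j))
      ((Finset.Ioi j).filter (fun i => σ i < σ j)) := by
    simp only [Finset.disjoint_left, Finset.mem_filter, Finset.mem_Iio, Finset.mem_Ioi]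
    rintro i ⟨h1, _⟩ ⟨h2, _⟩
    exact absurd (lt_trans h1 h2) (lt_irrefl _)
  have hcard : (univ.filter (fun i => σ i < σ j)).card = (σ j).val := by
    have : (univ.filter (fun i => σ i < σ j)).card = (Finset.Iio (σ j)).card := by
      apply Finset.card_nbij (fun i => σ i)
      · intro i hi; simpa using hi
      · intro a ha b hb hab; exact σ.injective hab
      · intro v hv
        refine ⟨σ.symm v, by simpa using (by simpa using hv : v < σ j), by simp⟩
    rw [this, Fin.card_Iio]
  rw [hsplit, Finset.card_union_of_disjoint hdisj] at hcard
  exact hcard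

lemma rk_lt_rk {n : ℕ} (σ : Equiv.Perm (Fin n)) {j k : Fin n} (h : (j : ℕ) + 1 = (k : ℕ)) :
    σ j < σ k ↔ rk σ j < rk σ k := by
  classical
  have hjk : j < k := by omega
  constructor
  · intro hs
    have hsub : insert j ((Finset.Iio j).filter (fun i => σ i < σ j)) ⊆
        (Finset.Iio k).filter (fun i => σ i < σ k) := by
      intro i hi
      rcases Finset.mem_insert.1 hi with rfl | hi
      · exact Finset.mem_filter.2 ⟨Finset.mem_Iio.2 hjk, hs⟩
      · obtain ⟨h1, h2⟩ := Finset.mem_filter.1 hi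
        exact Finset.mem_filter.2 ⟨Finset.mem_Iio.2 (lt_trans (Finset.mem_Iio.1 h1) hjk),
          lt_trans h2 hs⟩
    have hnot : j ∉ (Finset.Iio j).filter (fun i => σ i < σ j) := by
      simp [Finset.mem_filter]
    have := Finset.card_le_card hsub
    rw [Finset.card_insert_of_notMem hnot] at this
    unfold rk
    omega
  · intro hr
    by_contra hns
    have hne : σ j ≠ σ k := fun e => absurd (σ.injective e) (by intro e'; omega)
    have hs : σ k < σ j := lt_of_le_of_ne (not_lt.1 hns) (Ne.symm hne)
    have hsub : (Finset.Iio k).filter (fun i => σ i < σ k) ⊆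
        (Finset.Iio j).filter (fun i => σ i < σ j) := by
      intro i hi
      obtain ⟨h1, h2⟩ := Finset.mem_filter.1 hi
      have hik : i < k := Finset.mem_Iio.1 h1
      have hij : i < j := by
        rcases lt_or_eq_of_le (show (i:ℕ) ≤ (j:ℕ) by omega) with hl | he
        · exact hl
        · exfalso; have : i = j := Fin.ext he; subst this; exact absurd h2 (by simp [not_lt.2 hs.le])
      exact Finset.mem_filter.2 ⟨Finset.mem_Iio.2 hij, lt_trans h2 hs⟩
    have := Finset.card_le_card hsub
    unfold rk at hr
    omega


/-- the downward agreement step -/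
lemma agree_step {n : ℕ} (σ τ : Equiv.Perm (Fin n)) (hr : ∀ j, rk σ j = rk τ j) (j : Fin n)
    (habove : ∀ i, j < i → σ i = τ i) : σ j = τ j := by
  classical
  -- tail counts agree as functions of the bound value
  have htail : ∀ v : Fin n, ((Finset.Ioi j).filter (fun i => τ i < v)).card =
      ((Finset.Ioi j).filter (fun i => σ i < v)).card := by
    intro v
    congr 1
    apply Finset.filter_congr
    intro i hi
    rw [habove i (Finset.mem_Ioi.1 hi)]
  -- main inequality helper: σ j < τ j → False
  have aux : ∀ (σ τ : Equiv.Perm (Fin n)), (∀ i, j < i → σ i = τ i) →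
      rk σ j = rk τ j → σ j < τ j → False := by
    intro σ τ habove hrk hlt
    have htail' : ((Finset.Ioi j).filter (fun i => τ i < τ j)).card =
        ((Finset.Ioi j).filter (fun i => σ i < τ j)).card := by
      congr 1; apply Finset.filter_congr; intro i hi; rw [habove i (Finset.mem_Ioi.1 hi)]
    have e1 := rk_add σ j
    have e2 := rk_add τ j
    rw [htail'] at e2
    have hsplit : ((Finset.Ioi j).filter (fun i => σ i < τ j)) =
        ((Finset.Ioi j).filter (fun i => σ i < σ j)) ∪
        ((Finset.Ioi j).filter (fun i => σ j ≤ σ i ∧ σ i < τ j)) := by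
      ext i
      simp only [Finset.mem_filter, Finset.mem_union, Finset.mem_Ioi]
      constructor
      · intro ⟨h1, h2⟩
        by_cases hc : σ i < σ j
        · exact Or.inl ⟨h1, hc⟩
        · exact Or.inr ⟨h1, not_lt.1 hc, h2⟩
      · rintro (⟨h1, h2⟩ | ⟨h1, h2, h3⟩)
        · exact ⟨h1, lt_trans h2 hlt⟩
        · exact ⟨h1, h3⟩
    have hdisj : Disjoint ((Finset.Ioi j).filter (fun i => σ i < σ j))
        ((Finset.Ioi j).filter (fun i => σ j ≤ σ i ∧ σ i < τ j)) := by
      simp only [Finset.disjoint_left, Finset.mem_filter, Finset.mem_Ioi]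
      rintro i ⟨_, h1⟩ ⟨_, h2, _⟩
      exact absurd h1 (not_lt.2 h2)
    have hW : ((Finset.Ioi j).filter (fun i => σ j ≤ σ i ∧ σ i < τ j)).card + (σ j).val + 1 ≤ (τ j).val := by
      have hinj : Set.InjOn (fun i => (σ i).val)
          ((Finset.Ioi j).filter (fun i => σ j ≤ σ i ∧ σ i < τ j)) := by
        intro x hx y hy hxy
        exact σ.injective (Fin.ext hxy)
      have hmaps : ∀ i ∈ (Finset.Ioi j).filter (fun i => σ j ≤ σ i ∧ σ i < τ j),
          (σ i).val ∈ (Finset.Ico (σ j).val (τ j).val).erase (σ j).val := by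
        intro i hi
        simp only [Finset.mem_filter, Finset.mem_Ioi] at hi
        obtain ⟨h1, h2, h3⟩ := hi
        have hne : (σ i).val ≠ (σ j).val := by
          intro e
          have h4 := σ.injective (Fin.ext e)
          subst h4
          exact absurd h1 (lt_irrefl _)
        simp only [Finset.mem_erase, Finset.mem_Ico]
        exact ⟨hne, h2, h3⟩
      have hcard := Finset.card_le_card_of_injOn _ hmaps hinj
      have hic : ((Finset.Ico (σ j).val (τ j).val).erase (σ j).val).card
          = (τ j).val - (σ j).val - 1 := by
        rw [Finset.card_erase_of_mem (by simp [Finset.mem_Ico]; omega), Nat.card_Ico]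
      have hfin : (σ j).val < (τ j).val := hlt
      omega
    rw [hsplit, Finset.card_union_of_disjoint hdisj] at e2
    unfold rk at hrk e1 e2
    omega
  rcases lt_trichotomy (σ j) (τ j) with h | h | h
  · exact absurd h (fun h => aux σ τ habove (hr j) h)
  · exact h
  · exact absurd h (fun h => aux τ σ (fun i hi => (habove i hi).symm) (hr j).symm h)


def Phi {n : ℕ} (σ : Equiv.Perm (Fin n)) : RSeq n :=
  fun j => ⟨rk σ j, Nat.lt_succ_of_le (by
    classical
    calc rk σ j ≤ (Finset.Iio j).card := Finset.card_filter_le _ _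
    _ = j.val := Fin.card_Iio _)⟩

lemma Phi_injective {n : ℕ} : Function.Injective (Phi (n := n)) := by
  intro σ τ h
  have hr : ∀ j, rk σ j = rk τ j := by
    intro j
    have := congrFun h j
    exact congrArg Fin.val this
  have H : ∀ (m : ℕ) (j : Fin n), n ≤ m + j.val + 1 → σ j = τ j := by
    intro m
    induction m with
    | zero =>
      intro j hj
      apply agree_step σ τ hr j
      intro i hi
      exfalso
      have := i.isLt
      have : (j:ℕ) < (i:ℕ) := hi
      omega
    | succ m ih =>
      intro j hj
      apply agree_step σ τ hr j
      intro i hi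
      apply ih
      have : (j:ℕ) < (i:ℕ) := hi
      omega
  exact Equiv.ext (fun j => H n j (by omega))

lemma card_RSeq (n : ℕ) : Fintype.card (RSeq n) = Nat.factorial n := by
  induction n with
  | zero => simp [RSeq]
  | succ n ih =>
    rw [Fintype.card_pi] at ih ⊢
    simp only [Fintype.card_fin] at ih ⊢
    rw [Fin.prod_univ_castSucc]
    simp only [Fin.coe_castSucc, Fin.val_last]
    rw [ih, Nat.factorial_succ, Nat.mul_comm]

lemma Phi_bijective {n : ℕ} : Function.Bijective (Phi (n := n)) := by
  rw [Fintype.bijective_iff_injective_and_card]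
  exact ⟨Phi_injective, by rw [Fintype.card_perm, Fintype.card_fin, card_RSeq]⟩


/-- rank-sequence version of `IsPeak`. -/
def RP {n : ℕ} (ρ : RSeq n) (i : ℕ) : Prop :=
  ∃ (h₂ : 2 ≤ i) (h₃ : i < n),
    (ρ ⟨i - 2, by omega⟩ : ℕ) < (ρ ⟨i - 1, by omega⟩ : ℕ) ∧
    (ρ ⟨i, h₃⟩ : ℕ) ≤ (ρ ⟨i - 1, by omega⟩ : ℕ)

lemma RP_elim {n : ℕ} (ρ : RSeq n) {i a b c : ℕ} (h : RP ρ i)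
    (ha : a = i - 2) (hb : b = i - 1) (hc : c = i)
    (haa : a < n) (hbb : b < n) (hcc : c < n) :
    (ρ ⟨a, haa⟩ : ℕ) < (ρ ⟨b, hbb⟩ : ℕ) ∧ (ρ ⟨c, hcc⟩ : ℕ) ≤ (ρ ⟨b, hbb⟩ : ℕ) := by
  subst ha hb hc
  obtain ⟨h2, h3, hx, hy⟩ := h
  exact ⟨hx, hy⟩

lemma isPeak_iff_RP {n : ℕ} (σ : Equiv.Perm (Fin n)) (i : ℕ) :
    IsPeak σ i ↔ RP (Phi σ) i := by
  unfold IsPeak RP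
  constructor
  · rintro ⟨h2, h3, hc1, hc2⟩
    refine ⟨h2, h3, ?_, ?_⟩
    · exact (rk_lt_rk σ (by simp; omega)).1 hc1
    · have hne : σ ⟨i - 1, by omega⟩ ≠ σ ⟨i, h3⟩ := by
        intro e
        have := σ.injective e
        have := congrArg Fin.val this
        simp at this
        omega
      have : ¬ (σ ⟨i - 1, by omega⟩ < σ ⟨i, h3⟩) := by
        intro hlt
        exact absurd hc2 (not_lt.2 hlt.le)
      have hnr := (rk_lt_rk σ (j := ⟨i-1, by omega⟩) (k := ⟨i, h3⟩) (by simp; omega)).not.1 this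
      simp only [Phi]
      omega
  · rintro ⟨h2, h3, hc1, hc2⟩
    refine ⟨h2, h3, ?_, ?_⟩
    · exact (rk_lt_rk σ (by simp; omega)).2 hc1
    · have hnr : ¬ rk σ ⟨i - 1, by omega⟩ < rk σ ⟨i, h3⟩ := by
        simp only [Phi] at hc1 hc2
        omega
      have := (rk_lt_rk σ (j := ⟨i-1, by omega⟩) (k := ⟨i, h3⟩) (by simp; omega)).not.2 hnr
      have hne : σ ⟨i - 1, by omega⟩ ≠ σ ⟨i, h3⟩ := by
        intro e
        have := σ.injective e
        have := congrArg Fin.val this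
        simp at this
        omega
      rcases lt_trichotomy (σ ⟨i - 1, by omega⟩) (σ ⟨i, h3⟩) with h | h | h
      · exact absurd h this
      · exact absurd h hne
      · exact h

open Classical in
noncomputable def rpSet {n : ℕ} (ρ : RSeq n) : Finset ℕ :=
  (Finset.range n).filter (fun i => RP ρ i)

lemma peakSet_eq_rpSet {n : ℕ} (σ : Equiv.Perm (Fin n)) : peakSet σ = rpSet (Phi σ) := by
  classical
  unfold peakSet rpSet
  apply Finset.filter_congr
  intro i _
  exact isPeak_iff_RP σ i

open Classical in
noncomputable def Cnt (n : ℕ) (P : Finset ℕ) : ℕ :=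
  ∑ ρ : RSeq n, if (∀ p ∈ P, RP ρ p) then 1 else 0

lemma numPeakSet_eq_Cnt (n : ℕ) (P : Finset ℕ)
    (hb : ∀ p ∈ P, 2 ≤ p ∧ p + 2 ≤ n)
    (hadj : ∀ q, 2 ≤ q → q < n → q ∉ P → ((q - 1) ∈ P ∨ (q + 1) ∈ P)) :
    numPeakSet n P = Cnt n P := by
  classical
  unfold numPeakSet
  have e1 : {σ : Equiv.Perm (Fin n) // peakSet σ = P} ≃ {ρ : RSeq n // rpSet ρ = P} := by
    apply Equiv.subtypeEquiv (Equiv.ofBijective Phi Phi_bijective)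
    intro σ
    rw [show (Equiv.ofBijective Phi Phi_bijective) σ = Phi σ from rfl, peakSet_eq_rpSet]
  have key : ∀ ρ : RSeq n, rpSet ρ = P ↔ (∀ p ∈ P, RP ρ p) := by
    intro ρ
    constructor
    · intro h p hp
      rw [← h] at hp
      exact (Finset.mem_filter.1 hp).2
    · intro h
      ext q
      unfold rpSet
      simp only [Finset.mem_filter, Finset.mem_range]
      constructor
      · rintro ⟨hq, hrp⟩
        by_contra hqP
        obtain ⟨hq2, hq3, hc1, hc2⟩ := hrp
        have hq2' : 2 ≤ q := hq2
        have hq3' : q < n := hq3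
        rcases hadj q hq2 hq3 hqP with hl | hr
        · have hbq : 2 ≤ q - 1 := by
            rcases hb _ hl with ⟨h1, _⟩
            omega
          have hE := RP_elim ρ (h _ hl) (a := q - 3) (b := q - 2) (c := q - 1)
            (by omega) (by omega) (by omega) (by omega) (by omega) (by omega)
          have hF := RP_elim ρ ⟨hq2, hq3, hc1, hc2⟩ (a := q - 2) (b := q - 1) (c := q)
            rfl rfl rfl (by omega) (by omega) (by omega)
          omega
        · have hbq : q + 1 < n := by
            rcases hb _ hr with ⟨_, h2⟩
            omega
          have hE := RP_elim ρ (h _ hr) (a := q - 1) (b := q) (c := q + 1)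
            (by omega) (by omega) rfl (by omega) (by omega) (by omega)
          have hF := RP_elim ρ ⟨hq2, hq3, hc1, hc2⟩ (a := q - 2) (b := q - 1) (c := q)
            rfl rfl rfl (by omega) (by omega) (by omega)
          omega
      · intro hq
        exact ⟨by have := hb q hq; omega, h q hq⟩
  have e2 : {ρ : RSeq n // rpSet ρ = P} ≃ {ρ : RSeq n // ∀ p ∈ P, RP ρ p} :=
    Equiv.subtypeEquivRight key
  rw [Nat.card_congr (e1.trans e2), Nat.card_eq_fintype_card, Fintype.card_subtype]
  unfold Cnt
  rw [Finset.card_filter]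

/-- snoc for rank sequences -/
def rsnoc {n : ℕ} (ρ : RSeq n) (x : Fin (n + 1)) : RSeq (n + 1) :=
  Fin.snoc (α := fun j : Fin (n+1) => Fin (j.val + 1)) ρ x

lemma rsnoc_val {n : ℕ} (ρ : RSeq n) (x : Fin (n + 1)) (a : ℕ) (ha : a < n) (ha' : a < n + 1) :
    (rsnoc ρ x ⟨a, ha'⟩ : ℕ) = (ρ ⟨a, ha⟩ : ℕ) := by
  have h : (⟨a, ha'⟩ : Fin (n+1)) = Fin.castSucc ⟨a, ha⟩ := by
    simp [Fin.castSucc_mk]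
  rw [h]
  unfold rsnoc
  rw [Fin.snoc_castSucc]

lemma rsnoc_last {n : ℕ} (ρ : RSeq n) (x : Fin (n + 1)) (ha' : n < n + 1) :
    (rsnoc ρ x ⟨n, ha'⟩ : ℕ) = (x : ℕ) := by
  have h : (⟨n, ha'⟩ : Fin (n+1)) = Fin.last n := rfl
  rw [h]
  unfold rsnoc
  rw [Fin.snoc_last]

lemma sum_peel {n : ℕ} (f : RSeq (n + 1) → ℕ) :
    ∑ ρ : RSeq (n + 1), f ρ = ∑ x : Fin (n + 1), ∑ ρ' : RSeq n, f (rsnoc ρ' x) := by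
  classical
  rw [← Equiv.sum_comp (Fin.snocEquiv (fun j : Fin (n+1) => Fin (j.val + 1))) f]
  rw [Fintype.sum_prod_type]
  rfl

lemma RP_rsnoc {n : ℕ} (ρ : RSeq n) (x : Fin (n + 1)) (p : ℕ) (hp : p + 1 ≤ n) :
    RP (rsnoc ρ x) p ↔ RP ρ p := by
  unfold RP
  constructor
  · rintro ⟨h2, h3, c1, c2⟩
    have e1 := rsnoc_val ρ x (p - 2) (by omega) (by omega)
    have e2 := rsnoc_val ρ x (p - 1) (by omega) (by omega)
    have e3 := rsnoc_val ρ x p (by omega) (by omega)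
    exact ⟨h2, by omega, by omega, by omega⟩
  · rintro ⟨h2, h3, c1, c2⟩
    have e1 := rsnoc_val ρ x (p - 2) (by omega) (by omega)
    have e2 := rsnoc_val ρ x (p - 1) (by omega) (by omega)
    have e3 := rsnoc_val ρ x p (by omega) (by omega)
    exact ⟨h2, by omega, by omega, by omega⟩

lemma LA (n : ℕ) (P : Finset ℕ) (h : ∀ p ∈ P, 2 ≤ p ∧ p + 1 ≤ n) :
    Cnt (n + 1) P = (n + 1) * Cnt n P := by
  classical
  unfold Cnt
  rw [sum_peel]
  have : ∀ x : Fin (n+1), ∀ ρ' : RSeq n,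
      (if (∀ p ∈ P, RP (rsnoc ρ' x) p) then 1 else 0) = if (∀ p ∈ P, RP ρ' p) then 1 else 0 := by
    intro x ρ'
    apply if_congr _ rfl rfl
    constructor
    · intro hh p hp
      exact (RP_rsnoc ρ' x p (h p hp).2).1 (hh p hp)
    · intro hh p hp
      exact (RP_rsnoc ρ' x p (h p hp).2).2 (hh p hp)
  calc ∑ x : Fin (n+1), ∑ ρ' : RSeq n, (if (∀ p ∈ P, RP (rsnoc ρ' x) p) then 1 else 0)
      = ∑ _x : Fin (n+1), ∑ ρ' : RSeq n, (if (∀ p ∈ P, RP ρ' p) then 1 else 0) := by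
        apply Finset.sum_congr rfl
        intro x _
        apply Finset.sum_congr rfl
        intro ρ' _
        exact this x ρ'
    _ = (n + 1) * ∑ ρ' : RSeq n, (if (∀ p ∈ P, RP ρ' p) then 1 else 0) := by
        rw [Finset.sum_const, Finset.card_univ, Fintype.card_fin, smul_eq_mul]

open Finset

open Finset

lemma sum_ite_ge (m c : ℕ) (hc : c ≤ m) (F : ℕ → ℕ) :
    ∑ k ∈ range m, (if c ≤ k then F k else 0) + ∑ k ∈ range c, F k = ∑ k ∈ range m, F k := by
  classical
  have h1 : ∑ k ∈ range m, (if k < c then F k else 0) = ∑ k ∈ range c, F k := by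
    rw [Finset.sum_ite, Finset.sum_const_zero, add_zero]
    apply Finset.sum_congr
    · ext i; simp only [mem_filter, mem_range]; omega
    · intros; rfl
  rw [← h1, ← Finset.sum_add_distrib]
  apply Finset.sum_congr rfl
  intro k _
  by_cases h : c ≤ k
  · rw [if_pos h, if_neg (by omega), add_zero]
  · rw [if_neg h, if_pos (by omega), zero_add]

lemma gauss_id (m : ℕ) : 2 * ∑ k ∈ range m, (k : ℤ) = m * (m - 1) := by
  induction m with
  | zero => simp
  | succ m ih =>
    rw [Finset.sum_range_succ, mul_add, ih]
    push_cast
    ring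

lemma gauss_id2 (m : ℕ) : 2 * ∑ k ∈ range m, ((k : ℤ) + 1) = m * (m + 1) := by
  induction m with
  | zero => simp
  | succ m ih =>
    rw [Finset.sum_range_succ, mul_add, ih]
    push_cast
    ring

lemma polysum (M : ℕ) (P Q : ℤ) :
    15 * ∑ c ∈ range M, (P - (c : ℤ) * (c - 1)) * (Q - ((c : ℤ) + 1) * ((c : ℤ) + 2)) =
      15*P*Q*M - P*(10*(M:ℤ)+15*(M:ℤ)^2+5*(M:ℤ)^3) - Q*(10*(M:ℤ)-15*(M:ℤ)^2+5*(M:ℤ)^3)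
        + (12*(M:ℤ)-15*(M:ℤ)^3+3*(M:ℤ)^5) := by
  induction M with
  | zero => simp
  | succ M ih =>
    rw [Finset.sum_range_succ, mul_add, ih]
    push_cast
    ring

lemma cnt_lt (m c : ℕ) (hc : c ≤ m) : (∑ x : Fin m, if (x.val < c) then 1 else 0) = c := by
  classical
  rw [Fin.sum_univ_eq_sum_range (fun i => if (i < c) then 1 else 0) m]
  rw [Finset.sum_boole]
  have : (Finset.range m).filter (fun i => i < c) = Finset.range c := by
    ext i; simp only [Finset.mem_filter, Finset.mem_range]; omega
  rw [this, Finset.card_range]; simp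

lemma cnt_le (m c : ℕ) (hc : c + 1 ≤ m) : (∑ x : Fin m, if (x.val ≤ c) then 1 else 0) = c + 1 := by
  classical
  rw [Fin.sum_univ_eq_sum_range (fun i => if (i ≤ c) then 1 else 0) m]
  rw [Finset.sum_boole]
  have : (Finset.range m).filter (fun i => i ≤ c) = Finset.range (c + 1) := by
    ext i; simp only [Finset.mem_filter, Finset.mem_range]; omega
  rw [this, Finset.card_range]; simp

lemma blockC (n : ℕ) :
    15 * (∑ x5 : Fin (n + 5), ∑ x4 : Fin (n + 4), ∑ x3 : Fin (n + 3), ∑ x2 : Fin (n + 2),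
      ∑ x1 : Fin (n + 1),
      (if ((x1.val < x2.val ∧ x3.val ≤ x2.val) ∧ (x3.val < x4.val ∧ x5.val ≤ x4.val))
        then 1 else 0))
    = 2 * ((n+1) * (n+2) * (n+3) * (n+4) * (n+5)) := by
  classical
  -- collapse x1 and x2 : innermost two sums, for fixed x3 x4 x5
  have hx12 : ∀ c : ℕ, c ≤ n + 2 → ∀ b1 : Prop, ∀ _ : Decidable b1,
      (∑ x2 : Fin (n + 2), ∑ x1 : Fin (n + 1),
        (if ((x1.val < x2.val ∧ c ≤ x2.val) ∧ b1) then 1 else 0))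
      = (if b1 then 1 else 0) * ∑ x2 : Fin (n+2), (if c ≤ x2.val then x2.val else 0) := by
    intro c hc b1 db1
    rw [Finset.mul_sum]
    apply Finset.sum_congr rfl
    intro x2 _
    by_cases hb : b1
    · simp only [hb, and_true, if_true, one_mul]
      by_cases hcx : c ≤ x2.val
      · simp only [hcx, and_true, if_pos]
        exact cnt_lt (n+1) x2.val (by omega)
      · simp [hcx]
    · simp [hb]
  -- name the two inner profiles
  set f : ℕ → ℕ := fun c => ∑ x2 : Fin (n+2), (if c ≤ x2.val then x2.val else 0) with hf
  set g : ℕ → ℕ := fun c => ∑ x4 : Fin (n+4), (if c < x4.val then x4.val + 1 else 0) with hg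
  have step1 : (∑ x5 : Fin (n + 5), ∑ x4 : Fin (n + 4), ∑ x3 : Fin (n + 3), ∑ x2 : Fin (n + 2),
      ∑ x1 : Fin (n + 1),
      (if ((x1.val < x2.val ∧ x3.val ≤ x2.val) ∧ (x3.val < x4.val ∧ x5.val ≤ x4.val))
        then 1 else 0))
      = ∑ x3 : Fin (n + 3), f x3.val * g x3.val := by
    have e1 : ∀ x5 : Fin (n+5), ∀ x4 : Fin (n+4), ∀ x3 : Fin (n+3),
        (∑ x2 : Fin (n + 2), ∑ x1 : Fin (n + 1),
          (if ((x1.val < x2.val ∧ x3.val ≤ x2.val) ∧ (x3.val < x4.val ∧ x5.val ≤ x4.val))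
            then 1 else 0))
        = (if x5.val ≤ x4.val then 1 else 0) * (if x3.val < x4.val then f x3.val else 0) := by
      intro x5 x4 x3
      rw [hx12 x3.val (by omega) _ inferInstance]
      by_cases h1 : x3.val < x4.val
      · by_cases h2 : x5.val ≤ x4.val
        · simp [h1, h2, hf]
        · simp [h1, h2]
      · simp [h1]
    calc (∑ x5 : Fin (n + 5), ∑ x4 : Fin (n + 4), ∑ x3 : Fin (n + 3), ∑ x2 : Fin (n + 2),
      ∑ x1 : Fin (n + 1),
      (if ((x1.val < x2.val ∧ x3.val ≤ x2.val) ∧ (x3.val < x4.val ∧ x5.val ≤ x4.val))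
        then 1 else 0))
        = ∑ x5 : Fin (n + 5), ∑ x4 : Fin (n + 4),
            (if x5.val ≤ x4.val then 1 else 0) *
              ∑ x3 : Fin (n + 3), (if x3.val < x4.val then f x3.val else 0) := by
          apply Finset.sum_congr rfl; intro x5 _
          apply Finset.sum_congr rfl; intro x4 _
          rw [Finset.mul_sum]
          apply Finset.sum_congr rfl; intro x3 _
          exact e1 x5 x4 x3
      _ = ∑ x4 : Fin (n + 4), ∑ x5 : Fin (n + 5),
            (if x5.val ≤ x4.val then 1 else 0) *
              ∑ x3 : Fin (n + 3), (if x3.val < x4.val then f x3.val else 0) := Finset.sum_comm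
      _ = ∑ x4 : Fin (n + 4), (x4.val + 1) *
              ∑ x3 : Fin (n + 3), (if x3.val < x4.val then f x3.val else 0) := by
          apply Finset.sum_congr rfl; intro x4 _
          rw [← Finset.sum_mul, cnt_le (n+5) x4.val (by omega)]
      _ = ∑ x4 : Fin (n + 4), ∑ x3 : Fin (n + 3),
            (if x3.val < x4.val then (x4.val + 1) * f x3.val else 0) := by
          apply Finset.sum_congr rfl; intro x4 _
          rw [Finset.mul_sum]
          apply Finset.sum_congr rfl; intro x3 _
          by_cases h : x3.val < x4.val <;> simp [h]
      _ = ∑ x3 : Fin (n + 3), ∑ x4 : Fin (n + 4),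
            (if x3.val < x4.val then (x4.val + 1) * f x3.val else 0) := Finset.sum_comm
      _ = ∑ x3 : Fin (n + 3), f x3.val * g x3.val := by
          apply Finset.sum_congr rfl; intro x3 _
          rw [hg]
          simp only []
          rw [Finset.mul_sum]
          apply Finset.sum_congr rfl; intro x4 _
          by_cases h : x3.val < x4.val
          · simp [h]; ring
          · simp [h]
  rw [step1]
  -- now work in ℤ
  have hfz : ∀ c : ℕ, c ≤ n + 2 → 2 * (f c : ℤ) = ((n:ℤ)+1)*((n:ℤ)+2) - (c:ℤ)*((c:ℤ)-1) := by
    intro c hc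
    have hn := sum_ite_ge (n+2) c hc (fun k => k)
    have hfr : f c = ∑ k ∈ range (n+2), (if c ≤ k then k else 0) := by
      rw [hf]
      exact Fin.sum_univ_eq_sum_range (fun k => if c ≤ k then k else 0) (n+2)
    have hn' : f c + ∑ k ∈ range c, k = ∑ k ∈ range (n+2), k := by rw [hfr]; exact hn
    have hcast := congrArg (fun x : ℕ => (x : ℤ)) hn'
    push_cast at hcast
    have g1 := gauss_id c
    have g2 := gauss_id (n+2)
    push_cast at g2
    linear_combination 2 * hcast + g2 - g1
  have hgz : ∀ c : ℕ, c ≤ n + 2 →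
      2 * (g c : ℤ) = ((n:ℤ)+4)*((n:ℤ)+5) - ((c:ℤ)+1)*((c:ℤ)+2) := by
    intro c hc
    have hn := sum_ite_ge (n+4) (c+1) (by omega) (fun k => k + 1)
    have hgr : g c = ∑ k ∈ range (n+4), (if c + 1 ≤ k then k + 1 else 0) := by
      show (∑ x4 : Fin (n+4), if c < x4.val then x4.val + 1 else 0)
        = ∑ k ∈ range (n+4), (if c + 1 ≤ k then k + 1 else 0)
      rw [Fin.sum_univ_eq_sum_range (fun k => if c < k then k + 1 else 0) (n+4)]
      apply Finset.sum_congr rfl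
      intro k _
      exact if_congr (by omega) rfl rfl
    have hn' : g c + ∑ k ∈ range (c+1), (k+1) = ∑ k ∈ range (n+4), (k+1) := by
      rw [hgr]; exact hn
    have hcast := congrArg (fun x : ℕ => (x : ℤ)) hn'
    push_cast at hcast
    have g1 := gauss_id2 (c+1)
    have g2 := gauss_id2 (n+4)
    push_cast at g1 g2
    linear_combination 2 * hcast + g2 - g1
  -- convert the x3 sum to a range sum and cast
  have hNr : (∑ x3 : Fin (n + 3), f x3.val * g x3.val) = ∑ c ∈ range (n+3), f c * g c :=
    Fin.sum_univ_eq_sum_range (fun c => f c * g c) (n+3)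
  rw [hNr]
  have hNz : ((∑ c ∈ range (n+3), f c * g c : ℕ) : ℤ) =
      ∑ c ∈ range (n+3), (f c : ℤ) * (g c : ℤ) := by push_cast; rfl
  have key : ∀ c ∈ range (n+3), 4 * ((f c : ℤ) * (g c : ℤ)) =
      (((n:ℤ)+1)*((n:ℤ)+2) - (c:ℤ)*((c:ℤ)-1)) *
      (((n:ℤ)+4)*((n:ℤ)+5) - ((c:ℤ)+1)*((c:ℤ)+2)) := by
    intro c hcm
    have hc : c ≤ n + 2 := by simp only [mem_range] at hcm; omega
    rw [← hfz c hc, ← hgz c hc]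
    ring
  have hsum4 : (4:ℤ) * ∑ c ∈ range (n+3), (f c : ℤ) * (g c : ℤ) =
      ∑ c ∈ range (n+3), (((n:ℤ)+1)*((n:ℤ)+2) - (c:ℤ)*((c:ℤ)-1)) *
      (((n:ℤ)+4)*((n:ℤ)+5) - ((c:ℤ)+1)*((c:ℤ)+2)) := by
    rw [Finset.mul_sum]
    exact Finset.sum_congr rfl key
  have hpoly := polysum (n+3) (((n:ℤ)+1)*((n:ℤ)+2)) (((n:ℤ)+4)*((n:ℤ)+5))
  have hfinal : (60:ℤ) * ((∑ c ∈ range (n+3), f c * g c : ℕ) : ℤ) =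
      8 * (((n:ℤ)+1)*((n:ℤ)+2)*((n:ℤ)+3)*((n:ℤ)+4)*((n:ℤ)+5)) := by
    rw [hNz]
    have e : (60:ℤ) * ∑ c ∈ range (n+3), (f c : ℤ) * (g c : ℤ)
        = 15 * ((4:ℤ) * ∑ c ∈ range (n+3), (f c : ℤ) * (g c : ℤ)) := by ring
    rw [e, hsum4, hpoly]
    push_cast
    ring
  have h4 : (4:ℤ) * ((15 * ∑ c ∈ range (n+3), f c * g c : ℕ) : ℤ) =
      4 * ((2 * ((n+1) * (n+2) * (n+3) * (n+4) * (n+5)) : ℕ) : ℤ) := by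
    push_cast
    push_cast at hfinal
    linarith
  have := mul_left_cancel₀ (by norm_num : (4:ℤ) ≠ 0) h4
  exact_mod_cast this

lemma gauss3 (m : ℕ) : 3 * ∑ k ∈ Finset.range (m + 1), (k + 1) * k = m * (m + 1) * (m + 2) := by
  induction m with
  | zero => simp
  | succ m ih =>
    rw [Finset.sum_range_succ, Nat.mul_add, ih]
    ring

lemma blockB (n : ℕ) :
    3 * ∑ x3 : Fin (n + 3), ∑ x2 : Fin (n + 2), ∑ x1 : Fin (n + 1),
      (if (x1.val < x2.val ∧ x3.val ≤ x2.val) then 1 else 0) = (n+1) * (n+2) * (n+3) := by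
  classical
  have h1 : ∀ x3 : Fin (n+3), ∀ x2 : Fin (n+2), ∑ x1 : Fin (n + 1),
      (if (x1.val < x2.val ∧ x3.val ≤ x2.val) then 1 else 0)
      = (if (x3.val ≤ x2.val) then 1 else 0) * x2.val := by
    intro x3 x2
    by_cases h : x3.val ≤ x2.val
    · simp only [h, and_true, if_true, one_mul]
      exact cnt_lt (n+1) x2.val (by omega)
    · simp [h]
  have h2 : ∀ x2 : Fin (n+2), ∑ x3 : Fin (n+3),
      (if (x3.val ≤ x2.val) then 1 else 0) * x2.val = (x2.val + 1) * x2.val := by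
    intro x2
    rw [← Finset.sum_mul]
    rw [cnt_le (n+3) x2.val (by omega)]
  calc 3 * ∑ x3 : Fin (n + 3), ∑ x2 : Fin (n + 2), ∑ x1 : Fin (n + 1),
      (if (x1.val < x2.val ∧ x3.val ≤ x2.val) then 1 else 0)
      = 3 * ∑ x2 : Fin (n + 2), ∑ x3 : Fin (n + 3),
        (if (x3.val ≤ x2.val) then 1 else 0) * x2.val := by
        rw [Finset.sum_comm]
        congr 1
        apply Finset.sum_congr rfl
        intro x2 _
        apply Finset.sum_congr rfl
        intro x3 _
        exact h1 x3 x2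
    _ = 3 * ∑ x2 : Fin (n + 2), (x2.val + 1) * x2.val := by
        congr 1
        exact Finset.sum_congr rfl (fun x2 _ => h2 x2)
    _ = 3 * ∑ k ∈ Finset.range (n + 2), (k + 1) * k := by
        rw [Fin.sum_univ_eq_sum_range (fun k => (k+1)*k) (n+2)]
    _ = (n+1) * (n+2) * (n+3) := gauss3 (n+1)


lemma ite_and_one (A B : Prop) [Decidable A] [Decidable B] :
    (if (A ∧ B) then (1:ℕ) else 0) = (if A then 1 else 0) * (if B then 1 else 0) := by
  by_cases hA : A <;> by_cases hB : B <;> simp [hA, hB]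

lemma LB (n : ℕ) (P : Finset ℕ) (h : ∀ p ∈ P, 2 ≤ p ∧ p + 1 ≤ n) :
    3 * Cnt (n + 3) (insert (n + 2) P) = (n+1) * (n+2) * (n+3) * Cnt n P := by
  letI : ∀ m (ρ : RSeq m) p, Decidable (RP ρ p) := fun _ _ _ => Classical.propDecidable _
  have key : Cnt (n + 3) (insert (n + 2) P) =
      (∑ x3 : Fin (n + 3), ∑ x2 : Fin (n + 2), ∑ x1 : Fin (n + 1),
        (if (x1.val < x2.val ∧ x3.val ≤ x2.val) then 1 else 0)) * Cnt n P := by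
    unfold Cnt
    calc (∑ ρ : RSeq (n+3), if (∀ p ∈ (insert (n+2) P : Finset ℕ), RP (n := n+3) ρ p) then 1 else 0)
        = ∑ x3 : Fin (n+3), ∑ ρ2 : RSeq (n+2),
            (if (∀ p ∈ (insert (n+2) P : Finset ℕ), RP (n := n+3) (rsnoc ρ2 x3) p) then 1 else 0) :=
          sum_peel _
      _ = ∑ x3 : Fin (n+3), ∑ x2 : Fin (n+2), ∑ ρ1 : RSeq (n+1),
            (if (∀ p ∈ (insert (n+2) P : Finset ℕ), RP (n := n+3) (rsnoc (rsnoc ρ1 x2) x3) p) then 1 else 0) := by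
          apply Finset.sum_congr rfl; intro x3 _
          exact sum_peel _
      _ = ∑ x3 : Fin (n+3), ∑ x2 : Fin (n+2), ∑ x1 : Fin (n+1), ∑ ρ : RSeq n,
            (if (∀ p ∈ (insert (n+2) P : Finset ℕ), RP (n := n+3) (rsnoc (rsnoc (rsnoc ρ x1) x2) x3) p) then 1 else 0) := by
          apply Finset.sum_congr rfl; intro x3 _
          apply Finset.sum_congr rfl; intro x2 _
          exact sum_peel _
      _ = ∑ x3 : Fin (n+3), ∑ x2 : Fin (n+2), ∑ x1 : Fin (n+1), ∑ ρ : RSeq n,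
            (if (x1.val < x2.val ∧ x3.val ≤ x2.val) then 1 else 0) *
            (if (∀ p ∈ P, RP ρ p) then 1 else 0) := by
          apply Finset.sum_congr rfl; intro x3 _
          apply Finset.sum_congr rfl; intro x2 _
          apply Finset.sum_congr rfl; intro x1 _
          apply Finset.sum_congr rfl; intro ρ _
          rw [← ite_and_one]
          apply if_congr _ rfl rfl
          rw [Finset.forall_mem_insert]
          constructor
          · rintro ⟨h1, h2⟩
            constructor
            · -- translate RP at n+2 into the coordinate inequalities
              have hv0 : ((rsnoc (rsnoc (rsnoc ρ x1) x2) x3) ⟨n, by omega⟩ : ℕ) = x1.val := by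
                rw [rsnoc_val _ _ n (by omega) (by omega), rsnoc_val _ _ n (by omega) (by omega)]
                exact rsnoc_last _ _ _
              have hv1 : ((rsnoc (rsnoc (rsnoc ρ x1) x2) x3) ⟨n+1, by omega⟩ : ℕ) = x2.val := by
                rw [rsnoc_val _ _ (n+1) (by omega) (by omega)]
                exact rsnoc_last _ _ _
              have hv2 : ((rsnoc (rsnoc (rsnoc ρ x1) x2) x3) ⟨n+2, by omega⟩ : ℕ) = x3.val := by
                exact rsnoc_last _ _ _
              have hE := RP_elim _ h1 (a := n) (b := n+1) (c := n+2)
                (by omega) (by omega) (by omega) (by omega) (by omega) (by omega)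
              omega
            · intro p hp
              have hb := h p hp
              exact (RP_rsnoc _ _ p (by omega)).1 ((RP_rsnoc _ _ p (by omega)).1
                ((RP_rsnoc _ _ p (by omega)).1 (h2 p hp)))
          · rintro ⟨⟨hc1, hc2⟩, h2⟩
            constructor
            · have hv0 : ((rsnoc (rsnoc (rsnoc ρ x1) x2) x3) ⟨n, by omega⟩ : ℕ) = x1.val := by
                rw [rsnoc_val _ _ n (by omega) (by omega), rsnoc_val _ _ n (by omega) (by omega)]
                exact rsnoc_last _ _ _
              have hv1 : ((rsnoc (rsnoc (rsnoc ρ x1) x2) x3) ⟨n+1, by omega⟩ : ℕ) = x2.val := by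
                rw [rsnoc_val _ _ (n+1) (by omega) (by omega)]
                exact rsnoc_last _ _ _
              have hv2 : ((rsnoc (rsnoc (rsnoc ρ x1) x2) x3) ⟨n+2, by omega⟩ : ℕ) = x3.val := by
                exact rsnoc_last _ _ _
              refine ⟨by omega, by omega, ?_, ?_⟩
              · exact (show ((rsnoc (rsnoc (rsnoc ρ x1) x2) x3) ⟨n, by omega⟩ : ℕ) <
                  ((rsnoc (rsnoc (rsnoc ρ x1) x2) x3) ⟨n+1, by omega⟩ : ℕ) from by omega)
              · exact (show ((rsnoc (rsnoc (rsnoc ρ x1) x2) x3) ⟨n+2, by omega⟩ : ℕ) ≤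
                  ((rsnoc (rsnoc (rsnoc ρ x1) x2) x3) ⟨n+1, by omega⟩ : ℕ) from by omega)
            · intro p hp
              have hb := h p hp
              exact (RP_rsnoc _ _ p (by omega)).2 ((RP_rsnoc _ _ p (by omega)).2
                ((RP_rsnoc _ _ p (by omega)).2 (h2 p hp)))
      _ = (∑ x3 : Fin (n + 3), ∑ x2 : Fin (n + 2), ∑ x1 : Fin (n + 1),
            (if (x1.val < x2.val ∧ x3.val ≤ x2.val) then 1 else 0)) * Cnt n P := by
          unfold Cnt
          rw [Finset.sum_mul]
          apply Finset.sum_congr rfl; intro x3 _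
          rw [Finset.sum_mul]
          apply Finset.sum_congr rfl; intro x2 _
          rw [Finset.sum_mul]
          apply Finset.sum_congr rfl; intro x1 _
          rw [← Finset.mul_sum]
  rw [key, ← Nat.mul_assoc, blockB n]

lemma LC (n : ℕ) (P : Finset ℕ) (h : ∀ p ∈ P, 2 ≤ p ∧ p + 1 ≤ n) :
    15 * Cnt (n + 5) (insert (n + 2) (insert (n + 4) P)) =
      2 * ((n+1) * (n+2) * (n+3) * (n+4) * (n+5)) * Cnt n P := by
  letI : ∀ m (ρ : RSeq m) p, Decidable (RP ρ p) := fun _ _ _ => Classical.propDecidable _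
  have key : Cnt (n + 5) (insert (n + 2) (insert (n + 4) P)) =
      (∑ x5 : Fin (n + 5), ∑ x4 : Fin (n + 4), ∑ x3 : Fin (n + 3), ∑ x2 : Fin (n + 2),
        ∑ x1 : Fin (n + 1),
        (if ((x1.val < x2.val ∧ x3.val ≤ x2.val) ∧ (x3.val < x4.val ∧ x5.val ≤ x4.val))
          then 1 else 0)) * Cnt n P := by
    unfold Cnt
    calc (∑ ρ : RSeq (n+5), if (∀ p ∈ (insert (n+2) (insert (n+4) P) : Finset ℕ), RP (n := n+5) ρ p) then 1 else 0)
        = ∑ x5 : Fin (n+5), ∑ ρ4 : RSeq (n+4),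
            (if (∀ p ∈ (insert (n+2) (insert (n+4) P) : Finset ℕ), RP (n := n+5) (rsnoc ρ4 x5) p) then 1 else 0) :=
          sum_peel _
      _ = ∑ x5 : Fin (n+5), ∑ x4 : Fin (n+4), ∑ ρ3 : RSeq (n+3),
            (if (∀ p ∈ (insert (n+2) (insert (n+4) P) : Finset ℕ), RP (n := n+5) (rsnoc (rsnoc ρ3 x4) x5) p)
              then 1 else 0) := by
          apply Finset.sum_congr rfl; intro x5 _
          exact sum_peel _
      _ = ∑ x5 : Fin (n+5), ∑ x4 : Fin (n+4), ∑ x3 : Fin (n+3), ∑ ρ2 : RSeq (n+2),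
            (if (∀ p ∈ (insert (n+2) (insert (n+4) P) : Finset ℕ), RP (n := n+5) (rsnoc (rsnoc (rsnoc ρ2 x3) x4) x5) p)
              then 1 else 0) := by
          apply Finset.sum_congr rfl; intro x5 _
          apply Finset.sum_congr rfl; intro x4 _
          exact sum_peel _
      _ = ∑ x5 : Fin (n+5), ∑ x4 : Fin (n+4), ∑ x3 : Fin (n+3), ∑ x2 : Fin (n+2),
            ∑ ρ1 : RSeq (n+1),
            (if (∀ p ∈ (insert (n+2) (insert (n+4) P) : Finset ℕ),
              RP (n := n+5) (rsnoc (rsnoc (rsnoc (rsnoc ρ1 x2) x3) x4) x5) p) then 1 else 0) := by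
          apply Finset.sum_congr rfl; intro x5 _
          apply Finset.sum_congr rfl; intro x4 _
          apply Finset.sum_congr rfl; intro x3 _
          exact sum_peel _
      _ = ∑ x5 : Fin (n+5), ∑ x4 : Fin (n+4), ∑ x3 : Fin (n+3), ∑ x2 : Fin (n+2),
            ∑ x1 : Fin (n+1), ∑ ρ : RSeq n,
            (if (∀ p ∈ (insert (n+2) (insert (n+4) P) : Finset ℕ),
              RP (n := n+5) (rsnoc (rsnoc (rsnoc (rsnoc (rsnoc ρ x1) x2) x3) x4) x5) p) then 1 else 0) := by
          apply Finset.sum_congr rfl; intro x5 _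
          apply Finset.sum_congr rfl; intro x4 _
          apply Finset.sum_congr rfl; intro x3 _
          apply Finset.sum_congr rfl; intro x2 _
          exact sum_peel _
      _ = ∑ x5 : Fin (n+5), ∑ x4 : Fin (n+4), ∑ x3 : Fin (n+3), ∑ x2 : Fin (n+2),
            ∑ x1 : Fin (n+1), ∑ ρ : RSeq n,
            (if ((x1.val < x2.val ∧ x3.val ≤ x2.val) ∧ (x3.val < x4.val ∧ x5.val ≤ x4.val))
              then 1 else 0) * (if (∀ p ∈ P, RP ρ p) then 1 else 0) := by
          apply Finset.sum_congr rfl; intro x5 _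
          apply Finset.sum_congr rfl; intro x4 _
          apply Finset.sum_congr rfl; intro x3 _
          apply Finset.sum_congr rfl; intro x2 _
          apply Finset.sum_congr rfl; intro x1 _
          apply Finset.sum_congr rfl; intro ρ _
          rw [← ite_and_one]
          apply if_congr _ rfl rfl
          rw [Finset.forall_mem_insert, Finset.forall_mem_insert]
          set τ := rsnoc (rsnoc (rsnoc (rsnoc (rsnoc ρ x1) x2) x3) x4) x5 with hτ
          have hv0 : (τ ⟨n, by omega⟩ : ℕ) = x1.val := by
            rw [hτ, rsnoc_val _ _ n (by omega) (by omega), rsnoc_val _ _ n (by omega) (by omega),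
              rsnoc_val _ _ n (by omega) (by omega), rsnoc_val _ _ n (by omega) (by omega)]
            exact rsnoc_last _ _ _
          have hv1 : (τ ⟨n+1, by omega⟩ : ℕ) = x2.val := by
            rw [hτ, rsnoc_val _ _ (n+1) (by omega) (by omega),
              rsnoc_val _ _ (n+1) (by omega) (by omega),
              rsnoc_val _ _ (n+1) (by omega) (by omega)]
            exact rsnoc_last _ _ _
          have hv2 : (τ ⟨n+2, by omega⟩ : ℕ) = x3.val := by
            rw [hτ, rsnoc_val _ _ (n+2) (by omega) (by omega),
              rsnoc_val _ _ (n+2) (by omega) (by omega)]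
            exact rsnoc_last _ _ _
          have hv3 : (τ ⟨n+3, by omega⟩ : ℕ) = x4.val := by
            rw [hτ, rsnoc_val _ _ (n+3) (by omega) (by omega)]
            exact rsnoc_last _ _ _
          have hv4 : (τ ⟨n+4, by omega⟩ : ℕ) = x5.val := by
            rw [hτ]
            exact rsnoc_last _ _ _
          constructor
          · rintro ⟨h1, h2, h3⟩
            have hE1 := RP_elim _ h1 (a := n) (b := n+1) (c := n+2)
              (by omega) (by omega) (by omega) (by omega) (by omega) (by omega)
            have hE2 := RP_elim _ h2 (a := n+2) (b := n+3) (c := n+4)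
              (by omega) (by omega) (by omega) (by omega) (by omega) (by omega)
            refine ⟨⟨⟨by omega, by omega⟩, ⟨by omega, by omega⟩⟩, ?_⟩
            intro p hp
            have hb := h p hp
            have hx := h3 p hp
            rw [hτ] at hx
            exact (RP_rsnoc _ _ p (by omega)).1 ((RP_rsnoc _ _ p (by omega)).1
              ((RP_rsnoc _ _ p (by omega)).1 ((RP_rsnoc _ _ p (by omega)).1
                ((RP_rsnoc _ _ p (by omega)).1 hx))))
          · rintro ⟨⟨⟨hc1, hc2⟩, hc3, hc4⟩, hP⟩
            refine ⟨⟨by omega, by omega, ?_, ?_⟩, ⟨by omega, by omega, ?_, ?_⟩, ?_⟩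
            · exact (show (τ ⟨n, by omega⟩ : ℕ) < (τ ⟨n+1, by omega⟩ : ℕ) from by omega)
            · exact (show (τ ⟨n+2, by omega⟩ : ℕ) ≤ (τ ⟨n+1, by omega⟩ : ℕ) from by omega)
            · exact (show (τ ⟨n+2, by omega⟩ : ℕ) < (τ ⟨n+3, by omega⟩ : ℕ) from by omega)
            · exact (show (τ ⟨n+4, by omega⟩ : ℕ) ≤ (τ ⟨n+3, by omega⟩ : ℕ) from by omega)
            · intro p hp
              have hb := h p hp
              rw [hτ]
              exact (RP_rsnoc _ _ p (by omega)).2 ((RP_rsnoc _ _ p (by omega)).2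
                ((RP_rsnoc _ _ p (by omega)).2 ((RP_rsnoc _ _ p (by omega)).2
                  ((RP_rsnoc _ _ p (by omega)).2 (hP p hp)))))
      _ = (∑ x5 : Fin (n + 5), ∑ x4 : Fin (n + 4), ∑ x3 : Fin (n + 3), ∑ x2 : Fin (n + 2),
            ∑ x1 : Fin (n + 1),
            (if ((x1.val < x2.val ∧ x3.val ≤ x2.val) ∧ (x3.val < x4.val ∧ x5.val ≤ x4.val))
              then 1 else 0)) * Cnt n P := by
          unfold Cnt
          rw [Finset.sum_mul]
          apply Finset.sum_congr rfl; intro x5 _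
          rw [Finset.sum_mul]
          apply Finset.sum_congr rfl; intro x4 _
          rw [Finset.sum_mul]
          apply Finset.sum_congr rfl; intro x3 _
          rw [Finset.sum_mul]
          apply Finset.sum_congr rfl; intro x2 _
          rw [Finset.sum_mul]
          apply Finset.sum_congr rfl; intro x1 _
          rw [← Finset.mul_sum]
  rw [key, ← Nat.mul_assoc, blockC n]

/-! ### The specific peak sets -/

def Rset (u : ℕ) : Finset ℕ := (Finset.range u).image (fun i => 3*i+3)

def Qset (s t : ℕ) : Finset ℕ :=
  (Finset.range (s+t+1)).image (fun i => if i < s then 3*i+3 else 3*i+2)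

lemma mem_Rset (u q : ℕ) : q ∈ Rset u ↔ (q % 3 = 0 ∧ 3 ≤ q ∧ q ≤ 3*u) := by
  unfold Rset
  simp only [Finset.mem_image, Finset.mem_range]
  constructor
  · rintro ⟨i, hi, rfl⟩; omega
  · rintro ⟨h1, h2, h3⟩; exact ⟨q/3 - 1, by omega, by omega⟩

lemma mem_Qset (s t q : ℕ) : q ∈ Qset s t ↔
    ((q % 3 = 0 ∧ 3 ≤ q ∧ q ≤ 3*s) ∨ (q % 3 = 2 ∧ 3*s+2 ≤ q ∧ q ≤ 3*s+3*t+2)) := by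
  unfold Qset
  simp only [Finset.mem_image, Finset.mem_range]
  constructor
  · rintro ⟨i, hi, rfl⟩
    split_ifs with hi2
    · left; omega
    · right; omega
  · rintro (⟨h1, h2, h3⟩ | ⟨h1, h2, h3⟩)
    · exact ⟨q/3 - 1, by omega, by split_ifs with h <;> omega⟩
    · exact ⟨(q-2)/3, by omega, by split_ifs with h <;> omega⟩

lemma Rset_zero : Rset 0 = ∅ := by
  ext q
  rw [mem_Rset]
  simp only [Finset.notMem_empty, iff_false, not_and]
  omega

lemma Rset_succ (u : ℕ) : Rset (u+1) = insert (3*u+3) (Rset u) := by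
  ext q
  rw [mem_Rset, Finset.mem_insert, mem_Rset]
  omega

lemma Qset_succ (s t : ℕ) : Qset s (t+1) = insert (3*s+3*t+5) (Qset s t) := by
  ext q
  rw [mem_Qset, Finset.mem_insert, mem_Qset]
  omega

lemma Qset_zero (s' : ℕ) :
    Qset (s'+1) 0 = insert (3*s'+3) (insert (3*s'+5) (Rset s')) := by
  ext q
  rw [mem_Qset, Finset.mem_insert, Finset.mem_insert, mem_Rset]
  omega

lemma Rset_bounds (u q : ℕ) (h : q ∈ Rset u) : 2 ≤ q ∧ q + 1 ≤ 3*u+1 := by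
  rw [mem_Rset] at h; omega

lemma Qset_bounds (s t q : ℕ) (h : q ∈ Qset s t) : 2 ≤ q ∧ q + 1 ≤ 3*s+3*t+3 := by
  rw [mem_Qset] at h; omega

lemma Qset_adj (s t : ℕ) (hs : 1 ≤ s) : ∀ q, 2 ≤ q → q < 3*s+3*t+4 → q ∉ Qset s t →
    ((q - 1) ∈ Qset s t ∨ (q + 1) ∈ Qset s t) := by
  intro q h2 h3 hq
  rw [mem_Qset] at hq
  rw [mem_Qset, mem_Qset]
  omega

/-! ### counting values -/

lemma Cnt_empty (n : ℕ) : Cnt n ∅ = Nat.factorial n := by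
  unfold Cnt
  simp only [Finset.notMem_empty, false_implies, implies_true, if_true]
  rw [Finset.sum_const, Finset.card_univ, card_RSeq, smul_eq_mul, mul_one]

lemma Dval (u : ℕ) : 3^u * Cnt (3*u+1) (Rset u) = Nat.factorial (3*u+1) := by
  induction u with
  | zero =>
    rw [Rset_zero]
    simpa using Cnt_empty 1
  | succ u ih =>
    have hLB : 3 * Cnt (3*u+1+3) (insert (3*u+1+2) (Rset u)) =
        (3*u+1+1) * (3*u+1+2) * (3*u+1+3) * Cnt (3*u+1) (Rset u) :=
      LB (3*u+1) (Rset u) (fun p hp => Rset_bounds u p hp)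
    have e1 : Cnt (3*(u+1)+1) (Rset (u+1)) = Cnt (3*u+1+3) (insert (3*u+1+2) (Rset u)) := by
      rw [show 3*(u+1)+1 = 3*u+1+3 from by ring, Rset_succ,
        show 3*u+3 = 3*u+1+2 from by ring]
    have efact : Nat.factorial (3*(u+1)+1) =
        (3*u+2) * ((3*u+3) * ((3*u+4) * Nat.factorial (3*u+1))) := by
      calc Nat.factorial (3*(u+1)+1) = (3*u+4) * Nat.factorial (3*u+3) := Nat.factorial_succ _
        _ = (3*u+4) * ((3*u+3) * Nat.factorial (3*u+2)) := by rw [Nat.factorial_succ (3*u+2)]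
        _ = (3*u+4) * ((3*u+3) * ((3*u+2) * Nat.factorial (3*u+1))) := by
            rw [Nat.factorial_succ (3*u+1)]
        _ = (3*u+2) * ((3*u+3) * ((3*u+4) * Nat.factorial (3*u+1))) := by ring
    calc 3^(u+1) * Cnt (3*(u+1)+1) (Rset (u+1))
        = 3^u * (3 * Cnt (3*u+1+3) (insert (3*u+1+2) (Rset u))) := by rw [e1]; ring
      _ = 3^u * ((3*u+1+1) * (3*u+1+2) * (3*u+1+3) * Cnt (3*u+1) (Rset u)) := by rw [hLB]
      _ = (3*u+2) * ((3*u+3) * ((3*u+4) * (3^u * Cnt (3*u+1) (Rset u)))) := by ring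
      _ = (3*u+2) * ((3*u+3) * ((3*u+4) * Nat.factorial (3*u+1))) := by rw [ih]
      _ = Nat.factorial (3*(u+1)+1) := efact.symm

lemma Bval (s t : ℕ) (hs : 1 ≤ s) :
    5 * 3^(s+t) * Cnt (3*s+3*t+3) (Qset s t) = 2 * Nat.factorial (3*s+3*t+3) := by
  induction t with
  | zero =>
    obtain ⟨s', rfl⟩ : ∃ s', s = s' + 1 := ⟨s - 1, by omega⟩
    have hLC : 15 * Cnt (3*s'+1+5) (insert (3*s'+1+2) (insert (3*s'+1+4) (Rset s'))) =
        2 * ((3*s'+1+1) * (3*s'+1+2) * (3*s'+1+3) * (3*s'+1+4) * (3*s'+1+5)) *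
          Cnt (3*s'+1) (Rset s') :=
      LC (3*s'+1) (Rset s') (fun p hp => Rset_bounds s' p hp)
    have e1 : Cnt (3*(s'+1)+3*0+3) (Qset (s'+1) 0) =
        Cnt (3*s'+1+5) (insert (3*s'+1+2) (insert (3*s'+1+4) (Rset s'))) := by
      rw [show 3*(s'+1)+3*0+3 = 3*s'+1+5 from by ring, Qset_zero,
        show 3*s'+3 = 3*s'+1+2 from by ring, show 3*s'+5 = 3*s'+1+4 from by ring]
    have efact : Nat.factorial (3*(s'+1)+3*0+3) =
        (3*s'+2) * (3*s'+3) * (3*s'+4) * (3*s'+5) * (3*s'+6) * Nat.factorial (3*s'+1) := by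
      calc Nat.factorial (3*(s'+1)+3*0+3)
          = (3*s'+6) * Nat.factorial (3*s'+5) := Nat.factorial_succ _
        _ = (3*s'+6) * ((3*s'+5) * Nat.factorial (3*s'+4)) := by rw [Nat.factorial_succ (3*s'+4)]
        _ = (3*s'+6) * ((3*s'+5) * ((3*s'+4) * Nat.factorial (3*s'+3))) := by
            rw [Nat.factorial_succ (3*s'+3)]
        _ = (3*s'+6) * ((3*s'+5) * ((3*s'+4) * ((3*s'+3) * Nat.factorial (3*s'+2)))) := by
            rw [Nat.factorial_succ (3*s'+2)]
        _ = (3*s'+6) * ((3*s'+5) * ((3*s'+4) * ((3*s'+3) *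
              ((3*s'+2) * Nat.factorial (3*s'+1))))) := by rw [Nat.factorial_succ (3*s'+1)]
        _ = (3*s'+2) * (3*s'+3) * (3*s'+4) * (3*s'+5) * (3*s'+6) * Nat.factorial (3*s'+1) := by
            ring
    calc 5 * 3^(s'+1+0) * Cnt (3*(s'+1)+3*0+3) (Qset (s'+1) 0)
        = 3^s' * (15 * Cnt (3*s'+1+5) (insert (3*s'+1+2) (insert (3*s'+1+4) (Rset s')))) := by
          rw [e1]; ring
      _ = 3^s' * (2 * ((3*s'+1+1) * (3*s'+1+2) * (3*s'+1+3) * (3*s'+1+4) * (3*s'+1+5)) *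
            Cnt (3*s'+1) (Rset s')) := by rw [hLC]
      _ = 2 * ((3*s'+2) * (3*s'+3) * (3*s'+4) * (3*s'+5) * (3*s'+6)) *
            (3^s' * Cnt (3*s'+1) (Rset s')) := by ring
      _ = 2 * ((3*s'+2) * (3*s'+3) * (3*s'+4) * (3*s'+5) * (3*s'+6)) *
            Nat.factorial (3*s'+1) := by rw [Dval s']
      _ = 2 * Nat.factorial (3*(s'+1)+3*0+3) := by rw [efact]; ring
  | succ t ih =>
    have hLB : 3 * Cnt (3*s+3*t+3+3) (insert (3*s+3*t+3+2) (Qset s t)) =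
        (3*s+3*t+3+1) * (3*s+3*t+3+2) * (3*s+3*t+3+3) * Cnt (3*s+3*t+3) (Qset s t) :=
      LB (3*s+3*t+3) (Qset s t) (fun p hp => Qset_bounds s t p hp)
    have e1 : Cnt (3*s+3*(t+1)+3) (Qset s (t+1)) =
        Cnt (3*s+3*t+3+3) (insert (3*s+3*t+3+2) (Qset s t)) := by
      rw [show 3*s+3*(t+1)+3 = 3*s+3*t+3+3 from by ring, Qset_succ,
        show 3*s+3*t+5 = 3*s+3*t+3+2 from by ring]
    have efact : Nat.factorial (3*s+3*(t+1)+3) =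
        (3*s+3*t+4) * (3*s+3*t+5) * (3*s+3*t+6) * Nat.factorial (3*s+3*t+3) := by
      calc Nat.factorial (3*s+3*(t+1)+3)
          = (3*s+3*t+6) * Nat.factorial (3*s+3*t+5) := Nat.factorial_succ _
        _ = (3*s+3*t+6) * ((3*s+3*t+5) * Nat.factorial (3*s+3*t+4)) := by
            rw [Nat.factorial_succ (3*s+3*t+4)]
        _ = (3*s+3*t+6) * ((3*s+3*t+5) * ((3*s+3*t+4) * Nat.factorial (3*s+3*t+3))) := by
            rw [Nat.factorial_succ (3*s+3*t+3)]
        _ = (3*s+3*t+4) * (3*s+3*t+5) * (3*s+3*t+6) * Nat.factorial (3*s+3*t+3) := by ring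
    calc 5 * 3^(s+(t+1)) * Cnt (3*s+3*(t+1)+3) (Qset s (t+1))
        = 5 * 3^(s+t) * (3 * Cnt (3*s+3*t+3+3) (insert (3*s+3*t+3+2) (Qset s t))) := by
          rw [e1]; ring
      _ = 5 * 3^(s+t) * ((3*s+3*t+3+1) * (3*s+3*t+3+2) * (3*s+3*t+3+3) *
            Cnt (3*s+3*t+3) (Qset s t)) := by rw [hLB]
      _ = (3*s+3*t+4) * (3*s+3*t+5) * (3*s+3*t+6) *
            (5 * 3^(s+t) * Cnt (3*s+3*t+3) (Qset s t)) := by ring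
      _ = (3*s+3*t+4) * (3*s+3*t+5) * (3*s+3*t+6) * (2 * Nat.factorial (3*s+3*t+3)) := by
          rw [ih]
      _ = 2 * Nat.factorial (3*s+3*(t+1)+3) := by rw [efact]; ring

/-! ### the composition -/

lemma sum_take_single (m a : ℕ) : ((List.take m [a]).sum) = min m 1 * a := by
  cases m <;> simp

lemma take_sum (s t i : ℕ) (hi : i ≤ s + t) :
    ((List.replicate s 3 ++ [2] ++ List.replicate t 3 ++ [2]).take (i+1)).sum
      = if i < s then 3*i+3 else 3*i+2 := by
  simp only [List.take_append, List.sum_append, List.take_replicate,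
    List.sum_replicate, smul_eq_mul, List.length_append, List.length_replicate,
    List.length_cons, List.length_nil, sum_take_single]
  split_ifs <;> omega

lemma csum (s t : ℕ) :
    (List.replicate s 3 ++ [2] ++ List.replicate t 3 ++ [2]).sum = 3*s+3*t+4 := by
  simp only [List.sum_append, List.sum_replicate, smul_eq_mul, List.sum_cons, List.sum_nil]
  omega

lemma compPeaks_eq (s t : ℕ) :
    compPeaks (List.replicate s 3 ++ [2] ++ List.replicate t 3 ++ [2]) = Qset s t := by
  unfold compPeaks Qset
  have hl : (List.replicate s 3 ++ [2] ++ List.replicate t 3 ++ [2]).length - 1 = s + t + 1 := by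
    simp only [List.length_append, List.length_replicate, List.length_cons, List.length_nil]
    omega
  rw [hl]
  apply Finset.image_congr
  intro i hi
  simp only [Finset.coe_range, Set.mem_Iio] at hi
  exact take_sum s t i (by omega)

end PeakAux

theorem Pcomp_three_s_two_three_t_two (s t : ℕ) (hs : 1 ≤ s) :
    5 * 3 ^ (s + t) *
      Pcomp (List.replicate s 3 ++ [2] ++ List.replicate t 3 ++ [2])
    = 2 * Nat.factorial (3 * s + 3 * t + 4) := by
  unfold Pcomp
  rw [PeakAux.csum s t, PeakAux.compPeaks_eq s t]
  rw [PeakAux.numPeakSet_eq_Cnt (3*s+3*t+4) (PeakAux.Qset s t)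
    (fun p hp => by have := PeakAux.Qset_bounds s t p hp; omega)
    (PeakAux.Qset_adj s t hs)]
  have hLA : PeakAux.Cnt (3*s+3*t+4) (PeakAux.Qset s t) =
      (3*s+3*t+3+1) * PeakAux.Cnt (3*s+3*t+3) (PeakAux.Qset s t) :=
    PeakAux.LA (3*s+3*t+3) (PeakAux.Qset s t) (fun p hp => PeakAux.Qset_bounds s t p hp)
  rw [hLA]
  calc 5 * 3^(s+t) * ((3*s+3*t+3+1) * PeakAux.Cnt (3*s+3*t+3) (PeakAux.Qset s t))
      = (3*s+3*t+4) * (5 * 3^(s+t) * PeakAux.Cnt (3*s+3*t+3) (PeakAux.Qset s t)) := by ring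
    _ = (3*s+3*t+4) * (2 * Nat.factorial (3*s+3*t+3)) := by rw [PeakAux.Bval s t hs]
    _ = 2 * Nat.factorial (3*s+3*t+4) := by
        rw [show Nat.factorial (3*s+3*t+4) = (3*s+3*t+4) * Nat.factorial (3*s+3*t+3) from
          Nat.factorial_succ (3*s+3*t+3)]
        ring
end
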